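/- arXiv:1511.02390 — 4 statements merged into one kernel-verified Lean document; each statement's English description precedes it below -/
import Mathlib

section
/- If each path-incidence vector a_p ∈ {0,1}ⁿ has at most L nonzero entries, then the gradient of ψ(t) = log(∑_{p∈P} exp(-⟨a_p, t⟩)) is Lipschitz continuous in the Euclidean norm with constant at most L². -/
open Finset RealInnerProductSpace

lemma key_bound {P : Type*} [Fintype P] {n : ℕ} (C : ℝ) (hC : 0 ≤ C)
    (w : P → ℝ) (hw0 : ∀ p, 0 ≤ w p) (hw1 : ∑ p, w p = 1)
    (b : P → EuclideanSpace ℝ (Fin n)) (hb : ∀ p, ‖b p‖ ^ 2 ≤ C)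
    (v : EuclideanSpace ℝ (Fin n)) :
    ‖∑ p, (w p * ((∑ q, w q * ⟪b q, v⟫) - ⟪b p, v⟫)) • b p‖ ≤ C * ‖v‖ := by
  classical
  set m : ℝ := ∑ q, w q * ⟪b q, v⟫ with hm
  set D : EuclideanSpace ℝ (Fin n) := ∑ p, (w p * (m - ⟪b p, v⟫)) • b p with hD
  have key : ∀ (u : EuclideanSpace ℝ (Fin n)), ∑ p, w p * ⟪b p, u⟫ ^ 2 ≤ C * ‖u‖ ^ 2 := by
    intro u
    calc ∑ p, w p * ⟪b p, u⟫ ^ 2 ≤ ∑ p, w p * (C * ‖u‖ ^ 2) := by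
          apply Finset.sum_le_sum
          intro p _
          apply mul_le_mul_of_nonneg_left _ (hw0 p)
          have h1 : |⟪b p, u⟫| ≤ ‖b p‖ * ‖u‖ := abs_real_inner_le_norm _ _
          have : ⟪b p, u⟫ ^ 2 ≤ (‖b p‖ * ‖u‖) ^ 2 := by
            rw [← sq_abs]
            exact pow_le_pow_left₀ (abs_nonneg _) h1 2
          calc ⟪b p, u⟫ ^ 2 ≤ (‖b p‖ * ‖u‖) ^ 2 := this
            _ = ‖b p‖ ^ 2 * ‖u‖ ^ 2 := by ring
            _ ≤ C * ‖u‖ ^ 2 := by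
                apply mul_le_mul_of_nonneg_right (hb p) (sq_nonneg _)
      _ = C * ‖u‖ ^ 2 := by rw [← Finset.sum_mul, hw1, one_mul]
  have hDD : ‖D‖ ^ 2 = ∑ p, (w p * (m - ⟪b p, v⟫)) * ⟪b p, D⟫ := by
    rw [← real_inner_self_eq_norm_sq]
    rw [hD, sum_inner]
    apply Finset.sum_congr rfl
    intro p _
    rw [real_inner_smul_left]
  have hCS : (∑ p, (w p * (m - ⟪b p, v⟫)) * ⟪b p, D⟫) ^ 2 ≤
      (∑ p, w p * (m - ⟪b p, v⟫) ^ 2) * (∑ p, w p * ⟪b p, D⟫ ^ 2) := by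
    have := Finset.sum_mul_sq_le_sq_mul_sq Finset.univ
      (fun p => Real.sqrt (w p) * (m - ⟪b p, v⟫)) (fun p => Real.sqrt (w p) * ⟪b p, D⟫)
    calc (∑ p, (w p * (m - ⟪b p, v⟫)) * ⟪b p, D⟫) ^ 2
        = (∑ p, (Real.sqrt (w p) * (m - ⟪b p, v⟫)) * (Real.sqrt (w p) * ⟪b p, D⟫)) ^ 2 := by
          congr 1
          apply Finset.sum_congr rfl
          intro p _
          have : Real.sqrt (w p) * Real.sqrt (w p) = w p := Real.mul_self_sqrt (hw0 p)
          ring_nf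
          rw [Real.sq_sqrt (hw0 p)]
          ring
      _ ≤ (∑ p, (Real.sqrt (w p) * (m - ⟪b p, v⟫)) ^ 2) * (∑ p, (Real.sqrt (w p) * ⟪b p, D⟫) ^ 2) := this
      _ = (∑ p, w p * (m - ⟪b p, v⟫) ^ 2) * (∑ p, w p * ⟪b p, D⟫ ^ 2) := by
          congr 1
          · apply Finset.sum_congr rfl; intro p _; rw [mul_pow, Real.sq_sqrt (hw0 p)]
          · apply Finset.sum_congr rfl; intro p _; rw [mul_pow, Real.sq_sqrt (hw0 p)]
  have hvar : ∑ p, w p * (m - ⟪b p, v⟫) ^ 2 ≤ C * ‖v‖ ^ 2 := by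
    have expand : ∑ p, w p * (m - ⟪b p, v⟫) ^ 2
        = (∑ p, w p * ⟪b p, v⟫ ^ 2) - m ^ 2 := by
      have : ∀ p, w p * (m - ⟪b p, v⟫) ^ 2
          = w p * ⟪b p, v⟫ ^ 2 - 2 * m * (w p * ⟪b p, v⟫) + m ^ 2 * w p := by
        intro p; ring
      rw [Finset.sum_congr rfl fun p _ => this p]
      rw [Finset.sum_add_distrib, Finset.sum_sub_distrib, ← Finset.mul_sum, ← Finset.mul_sum,
        ← hm, hw1]
      ring
    rw [expand]
    have := key v
    nlinarith [sq_nonneg m]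
  have hD2 : ‖D‖ ^ 4 ≤ (C * ‖v‖ ^ 2) * (C * ‖D‖ ^ 2) := by
    have h1 : (‖D‖ ^ 2) ^ 2 ≤ (∑ p, w p * (m - ⟪b p, v⟫) ^ 2) * (∑ p, w p * ⟪b p, D⟫ ^ 2) := by
      rw [hDD]; exact hCS
    have h2 := key D
    have h3 : (0:ℝ) ≤ ∑ p, w p * ⟪b p, D⟫ ^ 2 :=
      Finset.sum_nonneg fun p _ => mul_nonneg (hw0 p) (sq_nonneg _)
    calc ‖D‖ ^ 4 = (‖D‖ ^ 2) ^ 2 := by ring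
      _ ≤ (∑ p, w p * (m - ⟪b p, v⟫) ^ 2) * (∑ p, w p * ⟪b p, D⟫ ^ 2) := h1
      _ ≤ (C * ‖v‖ ^ 2) * (C * ‖D‖ ^ 2) := by
          apply mul_le_mul hvar h2 h3
          positivity
  by_cases hD0 : ‖D‖ = 0
  · rw [hD0]; positivity
  · have hDpos : 0 < ‖D‖ := lt_of_le_of_ne (norm_nonneg _) (Ne.symm hD0)
    have h5 : ‖D‖ ^ 2 * ‖D‖ ^ 2 ≤ (C * ‖v‖) ^ 2 * ‖D‖ ^ 2 := by nlinarith
    have h6 : ‖D‖ ^ 2 ≤ (C * ‖v‖) ^ 2 :=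
      le_of_mul_le_mul_right h5 (pow_pos hDpos 2)
    exact le_of_pow_le_pow_left₀ two_ne_zero (mul_nonneg hC (norm_nonneg v)) h6

noncomputable section StmtAux

variable {P : Type*} [Fintype P] {n : ℕ}

def Sfun (a : P → EuclideanSpace ℝ (Fin n)) (u : EuclideanSpace ℝ (Fin n)) : ℝ :=
  ∑ p, Real.exp (-⟪a p, u⟫)

def wfun (a : P → EuclideanSpace ℝ (Fin n)) (p : P) (u : EuclideanSpace ℝ (Fin n)) : ℝ :=
  Real.exp (-⟪a p, u⟫) * (Sfun a u)⁻¹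

def gfun (a : P → EuclideanSpace ℝ (Fin n)) (u : EuclideanSpace ℝ (Fin n)) :
    EuclideanSpace ℝ (Fin n) :=
  ∑ p, wfun a p u • a p

def wderiv (a : P → EuclideanSpace ℝ (Fin n)) (p : P) (u : EuclideanSpace ℝ (Fin n)) :
    EuclideanSpace ℝ (Fin n) →L[ℝ] ℝ :=
  wfun a p u • (∑ q, wfun a q u • innerSL ℝ (a q)) - wfun a p u • innerSL ℝ (a p)

def gderiv (a : P → EuclideanSpace ℝ (Fin n)) (u : EuclideanSpace ℝ (Fin n)) :
    EuclideanSpace ℝ (Fin n) →L[ℝ] EuclideanSpace ℝ (Fin n) :=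
  ∑ p, (wderiv a p u).smulRight (a p)

variable [Nonempty P] (a : P → EuclideanSpace ℝ (Fin n)) (u : EuclideanSpace ℝ (Fin n))

lemma Sfun_pos : 0 < Sfun a u :=
  Finset.sum_pos (fun p _ => Real.exp_pos _) univ_nonempty

lemma hasFDerivAt_exp_term (p : P) :
    HasFDerivAt (fun u : EuclideanSpace ℝ (Fin n) => Real.exp (-⟪a p, u⟫))
      ((-Real.exp (-⟪a p, u⟫)) • innerSL ℝ (a p)) u := by
  have h := ((innerSL ℝ (a p)).hasFDerivAt (x := u)).neg.exp
  refine h.congr_fderiv (Eq.symm ?_)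
  ext v
  simp

lemma hasFDerivAt_S :
    HasFDerivAt (Sfun a) (∑ p, (-Real.exp (-⟪a p, u⟫)) • innerSL ℝ (a p)) u :=
  HasFDerivAt.fun_sum fun p _ => hasFDerivAt_exp_term a u p

lemma hasFDerivAt_Sinv :
    HasFDerivAt (fun u => (Sfun a u)⁻¹)
      ((-((Sfun a u) ^ 2)⁻¹) • ∑ p, (-Real.exp (-⟪a p, u⟫)) • innerSL ℝ (a p)) u :=
  (hasDerivAt_inv (Sfun_pos a u).ne').comp_hasFDerivAt u (hasFDerivAt_S a u)

lemma hasFDerivAt_w (p : P) : HasFDerivAt (wfun a p) (wderiv a p u) u := by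
  have h := (hasFDerivAt_exp_term a u p).mul (hasFDerivAt_Sinv a u)
  refine h.congr_fderiv (Eq.symm ?_)
  ext v
  have hS := (Sfun_pos a u).ne'
  simp only [wderiv, ContinuousLinearMap.sub_apply, ContinuousLinearMap.add_apply,
    ContinuousLinearMap.smul_apply, ContinuousLinearMap.sum_apply, ContinuousLinearMap.coe_smul',
    Pi.smul_apply, innerSL_apply_apply, smul_eq_mul, ContinuousLinearMap.neg_apply]
  rw [sub_eq_add_neg]
  simp only [Finset.mul_sum]
  congr 1
  · exact Finset.sum_congr rfl fun x _ => by simp only [wfun]; field_simp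
  · simp only [wfun]; ring

lemma hasFDerivAt_g : HasFDerivAt (gfun a) (gderiv a u) u :=
  HasFDerivAt.fun_sum fun p _ => (hasFDerivAt_w a u p).smul_const (a p)

lemma hasGradientAt_psi :
    HasGradientAt (fun u : EuclideanSpace ℝ (Fin n) => Real.log (∑ p, Real.exp (-⟪a p, u⟫)))
      (-(gfun a u)) u := by
  have hlog := (hasFDerivAt_S a u).log (Sfun_pos a u).ne'
  rw [hasGradientAt_iff_hasFDerivAt]
  have : (fun u : EuclideanSpace ℝ (Fin n) => Real.log (∑ p, Real.exp (-⟪a p, u⟫)))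
      = fun u => Real.log (Sfun a u) := rfl
  rw [this]
  refine hlog.congr_fderiv (Eq.symm ?_)
  ext v
  have hS := (Sfun_pos a u).ne'
  simp only [InnerProductSpace.toDual_apply_apply, inner_neg_left, gfun, sum_inner,
    real_inner_smul_left, ContinuousLinearMap.smul_apply, ContinuousLinearMap.sum_apply,
    ContinuousLinearMap.neg_apply, ContinuousLinearMap.coe_smul', Pi.smul_apply,
    innerSL_apply_apply, smul_eq_mul]
  rw [Finset.mul_sum, ← Finset.sum_neg_distrib]
  exact Finset.sum_congr rfl fun x _ => by simp only [wfun]; field_simp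


lemma gderiv_apply (v : EuclideanSpace ℝ (Fin n)) :
    (gderiv a u) v
      = ∑ p, (wfun a p u * ((∑ q, wfun a q u * ⟪a q, v⟫) - ⟪a p, v⟫)) • a p := by
  simp only [gderiv, wderiv, ContinuousLinearMap.sum_apply,
    ContinuousLinearMap.smulRight_apply, ContinuousLinearMap.sub_apply,
    ContinuousLinearMap.smul_apply, ContinuousLinearMap.coe_smul', Pi.smul_apply,
    innerSL_apply_apply, smul_eq_mul]
  apply Finset.sum_congr rfl
  intro p _
  congr 1
  ring

lemma wfun_nonneg (p : P) : 0 ≤ wfun a p u :=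
  le_of_lt (mul_pos (Real.exp_pos _) (inv_pos.mpr (Sfun_pos a u)))

lemma wfun_sum_one : ∑ p, wfun a p u = 1 := by
  simp only [wfun]
  rw [← Finset.sum_mul]
  have : ∑ p, Real.exp (-⟪a p, u⟫) = Sfun a u := rfl
  rw [this]
  exact mul_inv_cancel₀ (Sfun_pos a u).ne'

lemma norm_gderiv_le (C : ℝ) (hC : 0 ≤ C) (hb : ∀ p, ‖a p‖ ^ 2 ≤ C) :
    ‖gderiv a u‖ ≤ C := by
  apply ContinuousLinearMap.opNorm_le_bound _ hC
  intro v
  rw [gderiv_apply]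
  exact key_bound C hC (fun p => wfun a p u) (fun p => wfun_nonneg a u p)
    (wfun_sum_one a u) a hb v

end StmtAux

/-- if each 0-1 incidence vector `a p` has at most `L` nonzero entries,
then the gradient of `ψ(t) = log (∑ p, exp (-⟪a p, t⟫))` is Lipschitz in the
Euclidean norm with constant at most `L²`. -/
theorem stmt8 (P : Type*) [Fintype P] [Nonempty P] (n : ℕ) (L : ℕ)
    (a : P → EuclideanSpace ℝ (Fin n))
    (ha01 : ∀ p e, a p e = 0 ∨ a p e = 1)
    (haL : ∀ p, (Finset.univ.filter fun e => a p e ≠ 0).card ≤ L) :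
    ∀ t s : EuclideanSpace ℝ (Fin n),
      ‖gradient (fun u : EuclideanSpace ℝ (Fin n) =>
          Real.log (∑ p, Real.exp (-⟪a p, u⟫))) t -
        gradient (fun u : EuclideanSpace ℝ (Fin n) =>
          Real.log (∑ p, Real.exp (-⟪a p, u⟫))) s‖ ≤ (L : ℝ) ^ 2 * ‖t - s‖ := by
  intro t s
  classical
  have ha2 : ∀ p, ‖a p‖ ^ 2 ≤ (L : ℝ) := by
    intro p
    have h1 : ‖a p‖ ^ 2 = ∑ e, (a p e) ^ 2 := by
      rw [EuclideanSpace.norm_eq, Real.sq_sqrt (by positivity)]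
      exact Finset.sum_congr rfl fun e _ => by rw [Real.norm_eq_abs, sq_abs]
    have h2 : ∑ e, (a p e) ^ 2 = ((Finset.univ.filter fun e => a p e ≠ 0).card : ℝ) := by
      have hfil := Finset.sum_filter_of_ne (s := Finset.univ) (f := fun e => a p e ^ 2)
        (p := fun e => a p e ≠ 0)
        (fun e _ h h0 => h (by simp [h0]))
      rw [← hfil]
      rw [Finset.card_eq_sum_ones, Nat.cast_sum]
      apply Finset.sum_congr rfl
      intro e he
      rw [Finset.mem_filter] at he
      rcases ha01 p e with h | h
      · exact absurd h he.2
      · simp [h]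
    rw [h1, h2]
    exact_mod_cast haL p
  have hgrad : ∀ u, gradient (fun u : EuclideanSpace ℝ (Fin n) =>
      Real.log (∑ p, Real.exp (-⟪a p, u⟫))) u = -(gfun a u) :=
    fun u => (hasGradientAt_psi a u).gradient
  rw [hgrad t, hgrad s]
  have hLnn : (0:ℝ) ≤ (L:ℝ) := Nat.cast_nonneg L
  have hlip : ‖gfun a s - gfun a t‖ ≤ (L : ℝ) * ‖s - t‖ :=
    convex_univ.norm_image_sub_le_of_norm_hasFDerivWithin_le
      (fun x _ => (hasFDerivAt_g a x).hasFDerivWithinAt)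
      (fun x _ => norm_gderiv_le a x (L : ℝ) hLnn ha2)
      (Set.mem_univ t) (Set.mem_univ s)
  have hLL : (L : ℝ) ≤ (L : ℝ) ^ 2 := by
    exact_mod_cast Nat.le_self_pow two_ne_zero L
  calc ‖-(gfun a t) - -(gfun a s)‖ = ‖gfun a s - gfun a t‖ := by rw [neg_sub_neg]
    _ ≤ (L : ℝ) * ‖s - t‖ := hlip
    _ = (L : ℝ) * ‖t - s‖ := by rw [norm_sub_rev]
    _ ≤ (L : ℝ) ^ 2 * ‖t - s‖ := by
        apply mul_le_mul_of_nonneg_right hLL (norm_nonneg _)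
end

section
/- Let ξ_p, p ∈ P, be i.i.d. Gumbel random variables with CDF exp(-e^{-ζ/γ - E}) and g : P → ℝ. Then the expectation of max_{p∈P}(-g_p + ξ_p) equals γ·log(∑_{p∈P} exp(-g_p/γ)). -/
open MeasureTheory ProbabilityTheory Finset
open scoped NNReal ENNReal

section Aux

open Set

lemma integral_log_mul_exp_neg :
    ∫ t in Ioi (0:ℝ), Real.log t * Real.exp (-t) = -Real.eulerMascheroniConstant := by
  have h1 : HasDerivAt Complex.GammaIntegral
      (∫ t : ℝ in Ioi 0, (t:ℂ) ^ ((1:ℂ) - 1) * (Real.log t * Real.exp (-t))) 1 :=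
    Complex.hasDerivAt_GammaIntegral (by norm_num)
  have heq : Complex.GammaIntegral =ᶠ[nhds (1:ℂ)] Complex.Gamma := by
    have hopen : IsOpen {s : ℂ | 0 < s.re} := isOpen_lt continuous_const Complex.continuous_re
    filter_upwards [hopen.mem_nhds (by norm_num : (0:ℝ) < (1:ℂ).re)] with s hs
    exact (Complex.Gamma_eq_integral hs).symm
  have h2 : HasDerivAt Complex.Gamma
      (∫ t : ℝ in Ioi 0, (t:ℂ) ^ ((1:ℂ) - 1) * (Real.log t * Real.exp (-t))) 1 :=
    h1.congr_of_eventuallyEq heq.symm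
  have h3 := h2.unique Complex.hasDerivAt_Gamma_one
  have h4 : ∫ t : ℝ in Ioi 0, ((Real.log t * Real.exp (-t) : ℝ) : ℂ)
      = -(Real.eulerMascheroniConstant : ℂ) := by
    rw [← h3]
    congr 1
    ext t
    simp [Complex.cpow_zero]
  rw [show (fun t : ℝ => ((Real.log t * Real.exp (-t) : ℝ) : ℂ)) =
      (fun t : ℝ => (RCLike.ofReal (K := ℂ) (Real.log t * Real.exp (-t)))) from rfl] at h4
  rw [integral_ofReal] at h4
  exact RCLike.ofReal_inj.mp (h4.trans (show -((Real.eulerMascheroniConstant : ℝ):ℂ) =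
    RCLike.ofReal (K := ℂ) (-Real.eulerMascheroniConstant) from (RCLike.ofReal_neg _).symm))

lemma integrableOn_log_mul_exp_neg :
    IntegrableOn (fun t => Real.log t * Real.exp (-t)) (Ioi (0:ℝ)) := by
  by_contra h
  have h0 : ∫ t in Ioi (0:ℝ), Real.log t * Real.exp (-t) = 0 := integral_undef h
  rw [integral_log_mul_exp_neg] at h0
  have := Real.one_half_lt_eulerMascheroniConstant
  linarith

lemma integrableOn_exp_neg_Ioi' (s : ℝ) :
    IntegrableOn (fun t => Real.exp (-t)) (Ioi s) := by
  have := exp_neg_integrableOn_Ioi s (zero_lt_one)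
  simpa [neg_one_mul] using this

lemma lintegral_exp_neg_Ioi (s : ℝ) :
    ∫⁻ t in Ioi s, ENNReal.ofReal (Real.exp (-t)) = ENNReal.ofReal (Real.exp (-s)) := by
  rw [← ofReal_integral_eq_lintegral_ofReal (integrableOn_exp_neg_Ioi' s)
    (ae_of_all _ fun x => Real.exp_nonneg _), integral_exp_neg_Ioi]

lemma measure_ext_of_Iio (μ ν : Measure ℝ) [IsFiniteMeasure μ] [IsFiniteMeasure ν]
    (h : ∀ a, μ (Iio a) = ν (Iio a)) : μ = ν := by
  refine Measure.ext_of_Iic μ ν fun a => ?_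
  have hset : Iic a = ⋂ n : ℕ, Iio (a + 1/(n+1)) := by
    ext x
    simp only [Set.mem_Iic, Set.mem_iInter, Set.mem_Iio]
    constructor
    · intro hx n
      have h1 : (0:ℝ) < 1/((n:ℝ)+1) := by positivity
      linarith
    · intro hx
      by_contra hc
      push_neg at hc
      obtain ⟨n, hn⟩ := exists_nat_one_div_lt (K := ℝ) (sub_pos.mpr hc)
      have h2 := hx n
      have h3 : x - a < 1 / ((n:ℝ) + 1) := by linarith
      linarith
  have key : ∀ (ρ : Measure ℝ), IsFiniteMeasure ρ →
      ρ (Iic a) = ⨅ n : ℕ, ρ (Iio (a + 1/(n+1))) := by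
    intro ρ hρ
    rw [hset]
    refine Directed.measure_iInter (fun n => measurableSet_Iio.nullMeasurableSet) ?_
      ⟨0, measure_ne_top ρ _⟩
    have key2 : ∀ m n : ℕ, m ≤ n → (1:ℝ)/((n:ℝ)+1) ≤ 1/((m:ℝ)+1) := fun m n hmn =>
      one_div_le_one_div_of_le (by positivity) (by
        have := (Nat.cast_le (α := ℝ)).mpr hmn; linarith)
    intro m n
    refine ⟨max m n, Iio_subset_Iio ?_, Iio_subset_Iio ?_⟩
    · linarith [key2 m (max m n) (Nat.le_max_left m n)]
    · linarith [key2 n (max m n) (Nat.le_max_right m n)]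
  rw [key μ ‹_›, key ν ‹_›]
  exact iInf_congr fun n => h _

end Aux

/-- for i.i.d. Gumbel noise `ξ_p` with CDF `exp (-exp (-ζ/γ - E))`,
the expectation of `max_p (-g p + ξ p)` equals `γ log (∑ p, exp (-g p / γ))`. -/
theorem stmt13 (P : Type*) [Fintype P] [Nonempty P] (γ : ℝ) (hγ : 0 < γ) (g : P → ℝ)
    (Ω : Type*) [MeasurableSpace Ω] (μ : Measure Ω) [IsProbabilityMeasure μ]
    (ξ : P → Ω → ℝ) (hmeas : ∀ p, Measurable (ξ p))
    (hindep : iIndepFun ξ μ)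
    (hcdf : ∀ p (ζ : ℝ), μ {ω | ξ p ω < ζ} =
      ENNReal.ofReal (Real.exp (-Real.exp (-(ζ / γ) - Real.eulerMascheroniConstant)))) :
    ∫ ω, (Finset.univ.sup' Finset.univ_nonempty fun p => -g p + ξ p ω) ∂μ =
      γ * Real.log (∑ p, Real.exp (-(g p) / γ)) := by
  classical
  set E := Real.eulerMascheroniConstant with hE
  set S := ∑ p, Real.exp (-(g p) / γ) with hS
  have hSpos : 0 < S := Finset.sum_pos (fun p _ => Real.exp_pos _) Finset.univ_nonempty
  set c := γ * Real.log S with hc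
  set M : Ω → ℝ := fun ω => Finset.univ.sup' Finset.univ_nonempty fun p => -g p + ξ p ω with hM
  have hMmeas : Measurable M := by
    have : M = Finset.univ.sup' Finset.univ_nonempty (fun p => fun ω => -g p + ξ p ω) := by
      ext ω; rw [Finset.sup'_apply]
    rw [this]
    exact Finset.measurable_sup' Finset.univ_nonempty
      (fun p _ => measurable_const.add (hmeas p))
  -- CDF of M
  have hMcdf : ∀ ζ : ℝ, μ (M ⁻¹' Set.Iio ζ) =
      ENNReal.ofReal (Real.exp (-(Real.exp (-(ζ/γ) - E) * S))) := by
    intro ζ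
    have hset : M ⁻¹' Set.Iio ζ = ⋂ p, ξ p ⁻¹' Set.Iio (ζ + g p) := by
      ext ω
      simp only [Set.mem_preimage, Set.mem_Iio, Set.mem_iInter, hM, Finset.sup'_lt_iff,
        Finset.mem_univ, forall_true_left]
      exact forall_congr' fun p => by constructor <;> intro h <;> linarith
    rw [hset, hindep.meas_iInter (fun p => ⟨Set.Iio (ζ + g p), measurableSet_Iio, rfl⟩)]
    have hterm : ∀ p, μ (ξ p ⁻¹' Set.Iio (ζ + g p)) =
        ENNReal.ofReal (Real.exp (-Real.exp (-((ζ + g p) / γ) - E))) := fun p => hcdf p (ζ + g p)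
    simp_rw [hterm]
    rw [← ENNReal.ofReal_prod_of_nonneg (fun p _ => Real.exp_nonneg _)]
    congr 1
    rw [← Real.exp_sum]
    congr 1
    rw [Finset.sum_neg_distrib]
    congr 1
    rw [Finset.mul_sum]
    refine Finset.sum_congr rfl fun p _ => ?_
    rw [← Real.exp_add]
    congr 1
    field_simp
    ring
  -- the explicit Gumbel-type measure
  set d : ℝ → ℝ≥0 := fun t => Real.toNNReal (Real.exp (-t)) with hd
  have hdmeas : Measurable d := by
    apply Measurable.real_toNNReal
    exact (Real.continuous_exp.comp continuous_neg).measurable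
  set η : Measure ℝ := (volume.restrict (Set.Ioi 0)).withDensity (fun t => (d t : ℝ≥0∞)) with hη
  have hηapp : ∀ A : Set ℝ, MeasurableSet A →
      η A = ∫⁻ t in A ∩ Set.Ioi 0, ENNReal.ofReal (Real.exp (-t)) := by
    intro A hA
    rw [hη, withDensity_apply _ hA, Measure.restrict_restrict hA]
    rfl
  have hηprob : IsProbabilityMeasure η := by
    constructor
    rw [hηapp _ MeasurableSet.univ, Set.univ_inter, lintegral_exp_neg_Ioi]
    simp
  set φ : ℝ → ℝ := fun t => -γ * (Real.log t + E) + c with hφ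
  have hφmeas : Measurable φ :=
    ((Real.measurable_log.add measurable_const).const_mul _).add measurable_const
  -- CDF of φ under η
  have hφcdf : ∀ ζ : ℝ, η (φ ⁻¹' Set.Iio ζ) =
      ENNReal.ofReal (Real.exp (-(Real.exp (-(ζ/γ) - E) * S))) := by
    intro ζ
    have hs₀ : Real.exp (-(ζ/γ) - E) * S = Real.exp ((c - ζ)/γ - E) := by
      rw [show (c - ζ)/γ - E = (-(ζ/γ) - E) + Real.log S by rw [hc]; field_simp; ring,
        Real.exp_add, Real.exp_log hSpos]
    have hinter : φ ⁻¹' Set.Iio ζ ∩ Set.Ioi 0 = Set.Ioi (Real.exp ((c - ζ)/γ - E)) := by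
      ext t
      simp only [Set.mem_inter_iff, Set.mem_preimage, Set.mem_Iio, Set.mem_Ioi, hφ]
      constructor
      · rintro ⟨h1, h2⟩
        rw [← Real.lt_log_iff_exp_lt h2, sub_lt_iff_lt_add, div_lt_iff₀ hγ]
        nlinarith
      · intro h1
        have h2 : 0 < t := lt_trans (Real.exp_pos _) h1
        refine ⟨?_, h2⟩
        rw [← Real.lt_log_iff_exp_lt h2, sub_lt_iff_lt_add, div_lt_iff₀ hγ] at h1
        nlinarith
    rw [hηapp _ (hφmeas measurableSet_Iio), hinter, lintegral_exp_neg_Ioi, hs₀]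
  -- measure identification
  have hmapeq : Measure.map M μ = Measure.map φ η := by
    haveI : IsProbabilityMeasure (Measure.map M μ) := Measure.isProbabilityMeasure_map hMmeas.aemeasurable
    haveI : IsProbabilityMeasure (Measure.map φ η) := Measure.isProbabilityMeasure_map hφmeas.aemeasurable
    refine measure_ext_of_Iio _ _ fun a => ?_
    rw [Measure.map_apply hMmeas measurableSet_Iio, Measure.map_apply hφmeas measurableSet_Iio,
      hMcdf, hφcdf]
  -- compute the expectation
  have hint1 : ∫ ω, M ω ∂μ = ∫ t, φ t ∂η := by
    have hA : ∫ x, (fun y => y) x ∂(Measure.map M μ) = ∫ ω, M ω ∂μ :=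
      integral_map (f := fun y => y) hMmeas.aemeasurable aestronglyMeasurable_id
    have hB : ∫ x, (fun y => y) x ∂(Measure.map φ η) = ∫ t, φ t ∂η :=
      integral_map (f := fun y => y) hφmeas.aemeasurable aestronglyMeasurable_id
    rw [← hA, ← hB, hmapeq]
  have hint2 : ∫ t, φ t ∂η = c := by
    rw [hη, integral_withDensity_eq_integral_smul hdmeas]
    have hcongr : ∀ t ∈ Set.Ioi (0:ℝ), d t • φ t
        = (-γ) * (Real.log t * Real.exp (-t)) + (c - γ * E) * Real.exp (-t) := by
      intro t _
      rw [hd]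
      simp only [NNReal.smul_def, Real.coe_toNNReal _ (Real.exp_nonneg _), smul_eq_mul, hφ]
      ring
    rw [setIntegral_congr_fun measurableSet_Ioi hcongr,
      integral_add ((integrableOn_log_mul_exp_neg).const_mul _)
        ((integrableOn_exp_neg_Ioi' 0).const_mul _),
      integral_const_mul, integral_const_mul, integral_log_mul_exp_neg, integral_exp_neg_Ioi]
    simp only [neg_zero, Real.exp_zero, mul_one]
    ring
  calc ∫ ω, M ω ∂μ = c := hint1.trans hint2
    _ = γ * Real.log S := rfl
end

section
/- Fenchel duality for the single-level entropy model: for γ > 0, d > 0, path-edge incidence vectors a_p ∈ {0,1}ⁿ, and strictly increasing continuous costs τ_e with σ_e(f) = ∫₀^f τ_e, one has min over x ∈ S(d), f_e = ∑_p (a_p)_e x_p of [∑_e σ_e(f_e) + γ ∑_p x_p log(x_p/d)] = - min over t ∈ ℝⁿ of [γ d log(∑_p exp(-⟨a_p, t⟩/γ)) + ∑_e σ_e*(t_e)], where σ_e* is the Fenchel conjugate of σ_e. -/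
open Finset Filter Topology

section auxlemmas

lemma ent_ub {a b : ℝ} (ha : 0 < a) (hab : a ≤ b) :
    b * Real.log b - a * Real.log a ≤ (b - a) * (Real.log b + 1) := by
  have hb : 0 < b := lt_of_lt_of_le ha hab
  have k1 : Real.log b - Real.log a ≤ b / a - 1 := by
    have := Real.log_le_sub_one_of_pos (show 0 < b / a by positivity)
    rwa [Real.log_div hb.ne' ha.ne'] at this
  have h2 : a * (Real.log b - Real.log a) ≤ b - a := by
    have := mul_le_mul_of_nonneg_left k1 ha.le
    calc a * (Real.log b - Real.log a) ≤ a * (b / a - 1) := this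
      _ = b - a := by field_simp
  nlinarith [h2]

lemma ent_lb {a b : ℝ} (ha : 0 < a) (hab : a ≤ b) :
    (b - a) * (Real.log a + 1) ≤ b * Real.log b - a * Real.log a := by
  have hb : 0 < b := lt_of_lt_of_le ha hab
  have k2 : Real.log a - Real.log b ≤ a / b - 1 := by
    have := Real.log_le_sub_one_of_pos (show 0 < a / b by positivity)
    rwa [Real.log_div ha.ne' hb.ne'] at this
  have h2 : b * (Real.log a - Real.log b) ≤ a - b := by
    have := mul_le_mul_of_nonneg_left k2 hb.le
    calc b * (Real.log a - Real.log b) ≤ b * (a / b - 1) := this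
      _ = a - b := by field_simp
  nlinarith [h2]

lemma rel_ent {x y : ℝ} (hx : 0 ≤ x) (hy : 0 < y) :
    x - y ≤ x * (Real.log x - Real.log y) := by
  rcases eq_or_lt_of_le hx with h | h
  · simp [← h, hy.le]
  · have k : Real.log y - Real.log x ≤ y / x - 1 := by
      have := Real.log_le_sub_one_of_pos (show 0 < y / x by positivity)
      rwa [Real.log_div hy.ne' h.ne'] at this
    have h2 : x * (Real.log y - Real.log x) ≤ y - x := by
      have := mul_le_mul_of_nonneg_left k h.le
      calc x * (Real.log y - Real.log x) ≤ x * (y / x - 1) := this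
        _ = y - x := by field_simp
    nlinarith [h2]

lemma T_cont {τ : ℝ → ℝ} (hc : ContinuousOn τ (Set.Ici 0)) :
    Continuous (fun z => τ (max z 0)) :=
  hc.comp_continuous (continuous_id.max continuous_const) (fun _ => Set.mem_Ici.2 (le_max_right _ _))

lemma T_mono {τ : ℝ → ℝ} (hm : StrictMonoOn τ (Set.Ici 0)) :
    Monotone (fun z => τ (max z 0)) :=
  fun _ _ hxy => hm.monotoneOn (Set.mem_Ici.2 (le_max_right _ _)) (Set.mem_Ici.2 (le_max_right _ _)) (max_le_max hxy le_rfl)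

lemma prim_deriv {T : ℝ → ℝ} (hc : Continuous T) (f : ℝ) :
    HasDerivAt (fun u => ∫ z in (0:ℝ)..u, T z) (T f) f :=
  intervalIntegral.integral_hasDerivAt_right (hc.intervalIntegrable _ _)
    (hc.stronglyMeasurableAtFilter _ _) hc.continuousAt

lemma prim_diff_bounds {T : ℝ → ℝ} (hc : Continuous T) (hm : Monotone T) {a b : ℝ} (hab : a ≤ b) :
    (b - a) * T a ≤ (∫ z in (0:ℝ)..b, T z) - ∫ z in (0:ℝ)..a, T z ∧
      (∫ z in (0:ℝ)..b, T z) - (∫ z in (0:ℝ)..a, T z) ≤ (b - a) * T b := by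
  have hsub : (∫ z in (0:ℝ)..b, T z) - ∫ z in (0:ℝ)..a, T z = ∫ z in a..b, T z := by
    rw [← intervalIntegral.integral_add_adjacent_intervals (a := 0) (b := a) (c := b)
      (hc.intervalIntegrable _ _) (hc.intervalIntegrable _ _)]
    ring
  constructor
  · rw [hsub]
    have := intervalIntegral.integral_mono_on (μ := MeasureTheory.volume) hab
      (intervalIntegrable_const) (hc.intervalIntegrable _ _)
      (fun x hx => hm hx.1)
    simpa [mul_comm] using this
  · rw [hsub]
    have := intervalIntegral.integral_mono_on (μ := MeasureTheory.volume) hab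
      (hc.intervalIntegrable _ _) (intervalIntegrable_const)
      (fun x hx => hm hx.2)
    simpa [mul_comm] using this

lemma sigma_eq_prim (τ : ℝ → ℝ) {f : ℝ} (hf : 0 ≤ f) :
    (∫ z in (0:ℝ)..f, τ z) = ∫ z in (0:ℝ)..f, τ (max z 0) := by
  apply intervalIntegral.integral_congr
  intro z hz
  rw [Set.uIcc_of_le hf] at hz
  simp [max_eq_left hz.1]

end auxlemmas

set_option maxHeartbeats 2000000

/-- Fenchel duality for the single-level entropy model:
`min_{x ∈ S(d), f = Θx} [∑ e, σ_e(f_e) + γ ∑ p, x_p log (x_p/d)]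
  = - min_{t ∈ ℝⁿ} [γ d log (∑ p, exp (-⟨a_p, t⟩/γ)) + ∑ e, σ_e*(t_e)]`,
both minima being attained. -/
theorem stmt17 (P : Type*) [Fintype P] [Nonempty P] (n : ℕ)
    (a : P → Fin n → ℝ) (ha : ∀ p e, a p e = 0 ∨ a p e = 1)
    (d γ : ℝ) (hd : 0 < d) (hγ : 0 < γ)
    (τ : Fin n → ℝ → ℝ)
    (hτcont : ∀ e, ContinuousOn (τ e) (Set.Ici 0))
    (hτmono : ∀ e, StrictMonoOn (τ e) (Set.Ici 0))
    (hτinf : ∀ e, Tendsto (τ e) atTop atTop)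
    (σ : Fin n → ℝ → ℝ) (hσ : ∀ e f, σ e f = ∫ z in (0:ℝ)..f, τ e z)
    (σs : Fin n → ℝ → ℝ)
    (hσs : ∀ e t, σs e t = sSup {v : ℝ | ∃ f, 0 ≤ f ∧ v = f * t - σ e f}) :
    ∃ vP vD : ℝ,
      IsLeast ((fun x : P → ℝ =>
          ∑ e, σ e (∑ p, a p e * x p) + γ * ∑ p, x p * Real.log (x p / d)) ''
        {x : P → ℝ | (∀ p, 0 ≤ x p) ∧ ∑ p, x p = d}) vP ∧
      IsLeast ((fun t : Fin n → ℝ =>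
          γ * d * Real.log (∑ p, Real.exp (-(∑ e, a p e * t e) / γ)) +
            ∑ e, σs e (t e)) '' Set.univ) vD ∧
      vP = -vD := by
  classical
  have ha0 : ∀ p e, 0 ≤ a p e := fun p e => by rcases ha p e with h | h <;> simp [h]
  set T : Fin n → ℝ → ℝ := fun e z => τ e (max z 0) with hTdef
  have hTcont : ∀ e, Continuous (T e) := fun e => T_cont (hτcont e)
  have hTmono : ∀ e, Monotone (T e) := fun e => T_mono (hτmono e)
  set Sg : Fin n → ℝ → ℝ := fun e f => ∫ z in (0:ℝ)..f, T e z with hSgdef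
  have hSgderiv : ∀ e f, HasDerivAt (Sg e) (T e f) f := fun e f => prim_deriv (hTcont e) f
  have hSgcont : ∀ e, Continuous (Sg e) :=
    fun e => continuous_iff_continuousAt.2 fun f => (hSgderiv e f).continuousAt
  have hσeq : ∀ e f, 0 ≤ f → σ e f = Sg e f := fun e f hf => by
    rw [hσ]; exact sigma_eq_prim (τ e) hf
  have hSglb : ∀ e u v, u ≤ v → (v - u) * T e u ≤ Sg e v - Sg e u :=
    fun e u v huv => (prim_diff_bounds (hTcont e) (hTmono e) huv).1
  have hSgub : ∀ e u v, u ≤ v → Sg e v - Sg e u ≤ (v - u) * T e v :=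
    fun e u v huv => (prim_diff_bounds (hTcont e) (hTmono e) huv).2
  have hTτ : ∀ e f, 0 ≤ f → T e f = τ e f := fun e f hf => by
    simp only [hTdef]; rw [max_eq_left hf]
  -- primal setup
  set F : Set (P → ℝ) := {x : P → ℝ | (∀ p, 0 ≤ x p) ∧ ∑ p, x p = d} with hFdef
  set Ψ : (P → ℝ) → ℝ := fun x => ∑ e, Sg e (∑ p, a p e * x p) +
    γ * ∑ p, (x p * Real.log (x p) - x p * Real.log d) with hΨdef
  have hlogdiv : ∀ u : ℝ, 0 ≤ u →
      u * Real.log (u / d) = u * Real.log u - u * Real.log d := by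
    intro u hu
    rcases eq_or_lt_of_le hu with h | h
    · simp [← h]
    · rw [Real.log_div h.ne' hd.ne']; ring
  have hΦΨ : ∀ x : P → ℝ, (∀ p, 0 ≤ x p) →
      (∑ e, σ e (∑ p, a p e * x p) + γ * ∑ p, x p * Real.log (x p / d)) = Ψ x := by
    intro x hx
    simp only [hΨdef]
    congr 1
    · exact Finset.sum_congr rfl fun e _ =>
        hσeq e _ (Finset.sum_nonneg fun p _ => mul_nonneg (ha0 p e) (hx p))
    · congr 1
      exact Finset.sum_congr rfl fun p _ => hlogdiv _ (hx p)
  have hΨcont : Continuous Ψ := by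
    apply Continuous.add
    · exact continuous_finset_sum _ fun e _ => (hSgcont e).comp
        (continuous_finset_sum _ fun p _ => continuous_const.mul (continuous_apply p))
    · exact continuous_const.mul (continuous_finset_sum _ fun p _ =>
        (Real.continuous_mul_log.comp (continuous_apply p)).sub
          ((continuous_apply p).mul continuous_const))
  have hFsub : F ⊆ Set.Icc (0 : P → ℝ) (fun _ => d) := by
    rintro x ⟨hx0, hxs⟩
    refine ⟨fun p => hx0 p, fun p => ?_⟩
    calc x p ≤ ∑ q, x q := Finset.single_le_sum (fun q _ => hx0 q) (Finset.mem_univ p)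
      _ = d := hxs
  have hFclosed : IsClosed F := by
    have hFeq : F = (⋂ p, {x : P → ℝ | 0 ≤ x p}) ∩ {x | ∑ p, x p = d} := by
      ext x; simp [hFdef, Set.mem_iInter]
    rw [hFeq]
    exact ((isClosed_iInter fun p => isClosed_le continuous_const (continuous_apply p))).inter
      (isClosed_eq (continuous_finset_sum _ fun p _ => continuous_apply p) continuous_const)
  have hFcompact : IsCompact F := (isCompact_Icc).of_isClosed_subset hFclosed hFsub
  have hcardpos : (0:ℝ) < Fintype.card P := by
    have := Fintype.card_pos (α := P); exact_mod_cast this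
  have hFne : F.Nonempty := by
    refine ⟨fun _ => d / Fintype.card P, fun p => by positivity, ?_⟩
    rw [Finset.sum_const, Finset.card_univ, nsmul_eq_mul]
    field_simp
  obtain ⟨x, hxF, hxmin⟩ := hFcompact.exists_isMinOn hFne hΨcont.continuousOn
  -- ============ positivity of minimizer ============
  have hxpos : ∀ r, 0 < x r := by
    intro q0
    rcases lt_or_ge 0 (x q0) with h | h
    · exact h
    exfalso
    have hxq : x q0 = 0 := le_antisymm h (hxF.1 q0)
    obtain ⟨p0, hp0⟩ : ∃ p, 0 < x p := by
      by_contra hc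
      push_neg at hc
      have hs : ∑ p, x p ≤ 0 := Finset.sum_nonpos fun p _ => hc p
      rw [hxF.2] at hs; linarith
    have hpq : p0 ≠ q0 := by rintro rfl; rw [hxq] at hp0; exact lt_irrefl _ hp0
    set f : Fin n → ℝ := fun e => ∑ r, a r e * x r with hfdef
    have hf0 : ∀ e, 0 ≤ f e := fun e =>
      Finset.sum_nonneg fun r _ => mul_nonneg (ha0 r e) (hxF.1 r)
    set B : ℝ := ∑ e, (|T e (f e + 1)| + |T e (f e - 1)|) with hBdef
    have hB0 : 0 ≤ B := Finset.sum_nonneg fun e _ => by positivity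
    set C₂ : ℝ := |Real.log (x p0 / 2)| + 1 + |Real.log d| with hC2def
    have hC20 : 0 ≤ C₂ := by positivity
    set K : ℝ := (B + γ * C₂ - γ * Real.log d) / γ + 1 with hKdef
    have hKγ : γ * K = B + γ * C₂ - γ * Real.log d + γ := by
      rw [hKdef]; field_simp
    set s : ℝ := min (min 1 (x p0 / 2)) (Real.exp (-K)) with hsdef
    have hspos : 0 < s := lt_min (lt_min one_pos (by positivity)) (Real.exp_pos _)
    have hs1 : s ≤ 1 := le_trans (min_le_left _ _) (min_le_left _ _)
    have hsxp : s ≤ x p0 / 2 := le_trans (min_le_left _ _) (min_le_right _ _)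
    have hlogs : Real.log s ≤ -K := by
      calc Real.log s ≤ Real.log (Real.exp (-K)) :=
            Real.log_le_log hspos (min_le_right _ _)
        _ = -K := Real.log_exp _
    set y : P → ℝ := fun r => x r + (if r = q0 then s else 0) - (if r = p0 then s else 0)
      with hydef
    have hyp : y p0 = x p0 - s := by simp [hydef, hpq]
    have hyq : y q0 = s := by simp [hydef, hpq.symm, Ne.symm hpq, hxq]
    have hyother : ∀ r, r ≠ p0 → r ≠ q0 → y r = x r := by
      intro r h1 h2; simp [hydef, h1, h2]
    have hyF : y ∈ F := by
      constructor
      · intro r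
        rcases eq_or_ne r p0 with rfl | h1
        · rw [hyp]; linarith
        rcases eq_or_ne r q0 with rfl | h2
        · rw [hyq]; linarith
        · rw [hyother r h1 h2]; exact hxF.1 r
      · show (∑ r, (x r + (if r = q0 then s else 0) - (if r = p0 then s else 0))) = d
        rw [Finset.sum_sub_distrib, Finset.sum_add_distrib,
          Finset.sum_ite_eq', Finset.sum_ite_eq']
        simp [hxF.2]
    have hkey : Ψ x ≤ Ψ y := hxmin hyF
    have hfy : ∀ e, (∑ r, a r e * y r) = f e + s * (a q0 e - a p0 e) := by
      intro e
      simp only [hydef, mul_sub, mul_add, mul_ite, mul_zero, Finset.sum_sub_distrib,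
        Finset.sum_add_distrib, Finset.sum_ite_eq', Finset.mem_univ, if_true]
      ring
    have hσbd : ∀ e, Sg e (f e + s * (a q0 e - a p0 e)) - Sg e (f e) ≤
        s * (|T e (f e + 1)| + |T e (f e - 1)|) := by
      intro e
      rcases ha q0 e with hq | hq <;> rcases ha p0 e with hp | hp
      · rw [hq, hp]
        have h0 : f e + s * ((0:ℝ) - 0) = f e := by ring
        rw [h0, sub_self]; positivity
      · -- q : 0, p : 1, Δ = -1
        rw [hq, hp]
        have h0 : f e + s * ((0:ℝ) - 1) = f e - s := by ring
        rw [h0]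
        have hlow : s * T e (f e - s) ≤ Sg e (f e) - Sg e (f e - s) := by
          have hh := hSglb e (f e - s) (f e) (by linarith)
          have e1 : f e - (f e - s) = s := by ring
          rw [e1] at hh; exact hh
        have h2 : T e (f e - 1) ≤ T e (f e - s) := hTmono e (by linarith)
        have m1 : s * T e (f e - 1) ≤ s * T e (f e - s) :=
          mul_le_mul_of_nonneg_left h2 hspos.le
        have m2 : -|T e (f e - 1)| ≤ T e (f e - 1) := neg_abs_le _
        have m3 : s * -|T e (f e - 1)| ≤ s * T e (f e - 1) :=
          mul_le_mul_of_nonneg_left m2 hspos.le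
        have m4 : 0 ≤ s * |T e (f e + 1)| := by positivity
        nlinarith [hlow, m1, m3, m4]
      · -- q : 1, p : 0, Δ = 1
        rw [hq, hp]
        have h0 : f e + s * ((1:ℝ) - 0) = f e + s := by ring
        rw [h0]
        have hup : Sg e (f e + s) - Sg e (f e) ≤ s * T e (f e + s) := by
          have hh := hSgub e (f e) (f e + s) (by linarith)
          have e1 : f e + s - f e = s := by ring
          rw [e1] at hh; exact hh
        have h2 : T e (f e + s) ≤ T e (f e + 1) := hTmono e (by linarith)
        have m1 : s * T e (f e + s) ≤ s * T e (f e + 1) :=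
          mul_le_mul_of_nonneg_left h2 hspos.le
        have m2 : T e (f e + 1) ≤ |T e (f e + 1)| := le_abs_self _
        have m3 : s * T e (f e + 1) ≤ s * |T e (f e + 1)| :=
          mul_le_mul_of_nonneg_left m2 hspos.le
        have m4 : 0 ≤ s * |T e (f e - 1)| := by positivity
        nlinarith [hup, m1, m3, m4]
      · rw [hq, hp]
        have h0 : f e + s * ((1:ℝ) - 1) = f e := by ring
        rw [h0, sub_self]; positivity
    have hσsum : (∑ e, Sg e (∑ r, a r e * y r)) - (∑ e, Sg e (f e)) ≤ s * B := by
      rw [← Finset.sum_sub_distrib]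
      calc ∑ e, (Sg e (∑ r, a r e * y r) - Sg e (f e))
          ≤ ∑ e, s * (|T e (f e + 1)| + |T e (f e - 1)|) :=
            Finset.sum_le_sum fun e _ => by rw [hfy e]; exact hσbd e
        _ = s * B := by rw [hBdef, Finset.mul_sum]
    have hgp : ((x p0 - s) * Real.log (x p0 - s) - (x p0 - s) * Real.log d) -
        (x p0 * Real.log (x p0) - x p0 * Real.log d) ≤ s * C₂ := by
      have hps : 0 < x p0 - s := by linarith
      have hlb := ent_lb hps (by linarith : x p0 - s ≤ x p0)
      have e1 : x p0 - (x p0 - s) = s := by ring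
      rw [e1] at hlb
      have hm : Real.log (x p0 / 2) ≤ Real.log (x p0 - s) :=
        Real.log_le_log (by positivity) (by linarith)
      have h1 : -Real.log (x p0 - s) ≤ |Real.log (x p0 / 2)| := by
        have := neg_abs_le (Real.log (x p0 / 2)); linarith
      have h2 : s * -Real.log (x p0 - s) ≤ s * |Real.log (x p0 / 2)| :=
        mul_le_mul_of_nonneg_left h1 hspos.le
      have h3 : Real.log d ≤ |Real.log d| := le_abs_self _
      have h4 : s * Real.log d ≤ s * |Real.log d| :=
        mul_le_mul_of_nonneg_left h3 hspos.le
      simp only [hC2def]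
      nlinarith [hlb, h2, h4, hspos.le]
    have hent : (∑ r, (y r * Real.log (y r) - y r * Real.log d)) -
        (∑ r, (x r * Real.log (x r) - x r * Real.log d)) ≤
        s * Real.log s - s * Real.log d + s * C₂ := by
      rw [← Finset.sum_sub_distrib]
      rw [Finset.sum_eq_add p0 q0 hpq
        (fun c _ hc => by rw [hyother c hc.1 hc.2]; ring)
        (fun hmem => absurd (Finset.mem_univ _) hmem)
        (fun hmem => absurd (Finset.mem_univ _) hmem)]
      rw [hyp, hyq, hxq]
      have hz : (0:ℝ) * Real.log 0 - 0 * Real.log d = 0 := by simp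
      nlinarith [hgp]
    have hΨdiff : Ψ y - Ψ x ≤ s * B + γ * (s * Real.log s - s * Real.log d + s * C₂) := by
      simp only [hΨdef]
      have hγent := mul_le_mul_of_nonneg_left hent hγ.le
      have : (∑ e, Sg e (∑ p, a p e * y p)) - (∑ e, Sg e (∑ p, a p e * x p)) ≤ s * B := hσsum
      linarith [this, hγent]
    -- contradiction
    have hE : B + γ * Real.log s - γ * Real.log d + γ * C₂ ≤ -γ := by
      have := mul_le_mul_of_nonneg_left hlogs hγ.le
      linarith [hKγ, this]
    have hfinal : Ψ y - Ψ x ≤ s * (-γ) := by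
      have hexp : s * B + γ * (s * Real.log s - s * Real.log d + s * C₂) =
          s * (B + γ * Real.log s - γ * Real.log d + γ * C₂) := by ring
      rw [hexp] at hΨdiff
      calc Ψ y - Ψ x ≤ s * (B + γ * Real.log s - γ * Real.log d + γ * C₂) := hΨdiff
        _ ≤ s * (-γ) := mul_le_mul_of_nonneg_left hE hspos.le
    nlinarith [hkey, hfinal, mul_pos hspos hγ]
  -- ============ KKT conditions ============
  set f : Fin n → ℝ := fun e => ∑ r, a r e * x r with hfdef
  have hf0 : ∀ e, 0 ≤ f e := fun e =>
    Finset.sum_nonneg fun r _ => mul_nonneg (ha0 r e) (hxF.1 r)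
  set t : Fin n → ℝ := fun e => τ e (f e) with htdef
  have hTf : ∀ e, T e (f e) = t e := fun e => hTτ e (f e) (hf0 e)
  have hKKT : ∀ p q, γ * Real.log (x p) + (∑ e, a p e * t e) =
      γ * Real.log (x q) + (∑ e, a q e * t e) := by
    intro p q
    rcases eq_or_ne p q with rfl | hpq
    · rfl
    set c : P → ℝ := fun r => (if r = p then (1:ℝ) else 0) - (if r = q then 1 else 0)
      with hcdef
    have hcp : c p = 1 := by simp [hcdef, hpq]
    have hcq : c q = -1 := by simp [hcdef, Ne.symm hpq]
    have hcother : ∀ r, r ≠ p → r ≠ q → c r = 0 := by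
      intro r h1 h2; simp [hcdef, h1, h2]
    set δ : ℝ := min (x p) (x q) / 2 with hδdef
    have hδpos : 0 < δ := by
      have h1 := hxpos p; have h2 := hxpos q
      rw [hδdef]; have : 0 < min (x p) (x q) := lt_min h1 h2; linarith
    have hδp : δ ≤ x p / 2 := by
      rw [hδdef]; have := min_le_left (x p) (x q); linarith
    have hδq : δ ≤ x q / 2 := by
      rw [hδdef]; have := min_le_right (x p) (x q); linarith
    set w : ℝ → P → ℝ := fun s r => x r + s * c r with hwdef
    have hw0 : w 0 = x := by funext r; simp [hwdef]
    have hwF : ∀ s : ℝ, |s| ≤ δ → w s ∈ F := by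
      intro s hs
      have hs1 : -δ ≤ s := neg_le_of_abs_le hs
      have hs2 : s ≤ δ := le_of_abs_le hs
      constructor
      · intro r
        rcases eq_or_ne r p with rfl | h1
        · show 0 ≤ x r + s * c r
          rw [hcp]; have := hxpos r; nlinarith [hδp]
        rcases eq_or_ne r q with rfl | h2
        · show 0 ≤ x r + s * c r
          rw [hcq]; have := hxpos r; nlinarith [hδq]
        · show 0 ≤ x r + s * c r
          rw [hcother r h1 h2]; have := hxpos r; linarith
      · show (∑ r, (x r + s * c r)) = d
        rw [Finset.sum_add_distrib, ← Finset.mul_sum]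
        have hcs : (∑ r, c r) = 0 := by
          simp only [hcdef, Finset.sum_sub_distrib, Finset.sum_ite_eq',
            Finset.mem_univ, if_true, sub_self]
        rw [hcs, mul_zero, add_zero, hxF.2]
    have hac : ∀ e, (∑ r, a r e * c r) = a p e - a q e := by
      intro e
      simp only [hcdef, mul_sub, mul_ite, mul_one, mul_zero, Finset.sum_sub_distrib,
        Finset.sum_ite_eq', Finset.mem_univ, if_true]
    have hfw : ∀ s e, (∑ r, a r e * w s r) = f e + s * (a p e - a q e) := by
      intro s e
      have h1 : (∑ r, a r e * w s r) = (∑ r, (a r e * x r + s * (a r e * c r))) := by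
        apply Finset.sum_congr rfl; intro r _
        show a r e * (x r + s * c r) = _; ring
      rw [h1, Finset.sum_add_distrib, ← Finset.mul_sum, hac]
    set ψ : ℝ → ℝ := fun s => ∑ e, Sg e (f e + s * (a p e - a q e)) +
      γ * ∑ r, ((x r + s * c r) * Real.log (x r + s * c r) -
        (x r + s * c r) * Real.log d) with hψdef
    have hψΨ : ∀ s, ψ s = Ψ (w s) := by
      intro s
      simp only [hψdef, hΨdef]
      congr 1
      exact Finset.sum_congr rfl fun e _ => by rw [hfw s e]
    have hloc : IsLocalMin ψ 0 := by
      have hev : ∀ᶠ s in 𝓝 (0:ℝ), ψ 0 ≤ ψ s := by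
        filter_upwards [Metric.ball_mem_nhds (0:ℝ) hδpos] with s hs
        have hsδ : |s| ≤ δ := by
          have := hs; rw [Metric.mem_ball, Real.dist_eq, sub_zero] at this
          exact this.le
        rw [hψΨ, hψΨ, hw0]
        exact hxmin (hwF s hsδ)
      exact hev
    have hder : HasDerivAt ψ ((∑ e, T e (f e) * (a p e - a q e)) +
        γ * ∑ r, ((Real.log (x r) + 1) * c r - c r * Real.log d)) 0 := by
      apply HasDerivAt.add
      · apply HasDerivAt.fun_sum
        intro e _
        have hinner : HasDerivAt (fun s : ℝ => f e + s * (a p e - a q e))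
            (a p e - a q e) 0 := by
          simpa using ((hasDerivAt_id (0:ℝ)).mul_const (a p e - a q e)).const_add (f e)
        have hout : HasDerivAt (Sg e) (T e (f e))
            ((fun s : ℝ => f e + s * (a p e - a q e)) 0) := by
          simpa using hSgderiv e (f e)
        have := hout.comp 0 hinner
        exact this
      · apply HasDerivAt.const_mul
        apply HasDerivAt.fun_sum
        intro r _
        have hinner : HasDerivAt (fun s : ℝ => x r + s * c r) (c r) 0 := by
          simpa using ((hasDerivAt_id (0:ℝ)).mul_const (c r)).const_add (x r)
        have hml : HasDerivAt (fun u : ℝ => u * Real.log u) (Real.log (x r) + 1)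
            ((fun s : ℝ => x r + s * c r) 0) := by
          simpa using Real.hasDerivAt_mul_log (hxpos r).ne'
        have h1 := hml.comp 0 hinner
        have h2 : HasDerivAt (fun s : ℝ => (x r + s * c r) * Real.log d)
            (c r * Real.log d) 0 := by
          simpa using hinner.mul_const (Real.log d)
        have := h1.sub h2
        exact this
    have hzero := hloc.deriv_eq_zero
    rw [hder.deriv] at hzero
    have hsumc : (∑ r, ((Real.log (x r) + 1) * c r - c r * Real.log d)) =
        (Real.log (x p) + 1 - Real.log d) - (Real.log (x q) + 1 - Real.log d) := by
      rw [Finset.sum_eq_add p q hpq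
        (fun r _ hr => by rw [hcother r hr.1 hr.2]; ring)
        (fun hmem => absurd (Finset.mem_univ _) hmem)
        (fun hmem => absurd (Finset.mem_univ _) hmem)]
      rw [hcp, hcq]; ring
    have hsumT : (∑ e, T e (f e) * (a p e - a q e)) =
        (∑ e, a p e * t e) - ∑ e, a q e * t e := by
      rw [← Finset.sum_sub_distrib]
      exact Finset.sum_congr rfl fun e _ => by rw [hTf e]; ring
    rw [hsumc, hsumT] at hzero
    nlinarith [hzero]
  -- ============ helpers ============
  have hswap : ∀ u : Fin n → ℝ, (∑ p, x p * (∑ e, a p e * u e)) = ∑ e, f e * u e := by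
    intro u
    simp only [Finset.mul_sum]
    rw [Finset.sum_comm]
    refine Finset.sum_congr rfl fun e _ => ?_
    rw [hfdef]
    rw [Finset.sum_mul]
    exact Finset.sum_congr rfl fun p _ => by ring
  have hbdd : ∀ e (u : ℝ), BddAbove {v : ℝ | ∃ g, 0 ≤ g ∧ v = g * u - σ e g} := by
    intro e u
    obtain ⟨M, hM0, hM⟩ : ∃ M : ℝ, 0 ≤ M ∧ ∀ z, M ≤ z → u ≤ τ e z := by
      have hev := (hτinf e).eventually_ge_atTop u
      rw [eventually_atTop] at hev
      obtain ⟨M0, hM0⟩ := hev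
      exact ⟨max M0 0, le_max_right _ _, fun z hz => hM0 z (le_trans (le_max_left _ _) hz)⟩
    refine ⟨M * |u| + M * |τ e 0|, ?_⟩
    rintro v ⟨g, hg0, rfl⟩
    have hSg0 : Sg e 0 = 0 := intervalIntegral.integral_same
    have hT0 : T e 0 = τ e 0 := hTτ e 0 le_rfl
    rw [hσeq e g hg0]
    rcases le_total g M with hgM | hgM
    · have h1 := hSglb e 0 g hg0
      rw [hSg0, hT0] at h1
      have h2 : u - τ e 0 ≤ |u| + |τ e 0| := by
        have := le_abs_self u; have := neg_abs_le (τ e 0); linarith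
      have h3 : g * (u - τ e 0) ≤ g * (|u| + |τ e 0|) := mul_le_mul_of_nonneg_left h2 hg0
      have h4 : g * (|u| + |τ e 0|) ≤ M * (|u| + |τ e 0|) :=
        mul_le_mul_of_nonneg_right hgM (by positivity)
      nlinarith [h1, h3, h4]
    · have h1 := hSglb e 0 M hM0
      rw [hSg0, hT0] at h1
      have h2 := hSglb e M g hgM
      have hTM : T e M = τ e M := hTτ e M hM0
      have h3 : (g - M) * u ≤ (g - M) * T e M := by
        rw [hTM]; exact mul_le_mul_of_nonneg_left (hM M le_rfl) (by linarith)
      have h4 : M * u ≤ M * |u| := mul_le_mul_of_nonneg_left (le_abs_self u) hM0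
      have h5 : -(M * τ e 0) ≤ M * |τ e 0| := by
        have h6 := neg_abs_le (τ e 0); nlinarith
      nlinarith [h1, h2, h3, h4, h5]
  have hFen : ∀ e (u : ℝ), f e * u - σ e (f e) ≤ σs e u := by
    intro e u
    rw [hσs]
    exact le_csSup (hbdd e u) ⟨f e, hf0 e, rfl⟩
  -- ============ Gibbs identification ============
  set c : P → ℝ := fun p => ∑ e, a p e * t e with hcdef
  set Z : ℝ := ∑ p, Real.exp (-c p / γ) with hZdef
  have hZpos : 0 < Z := Finset.sum_pos (fun p _ => Real.exp_pos _) Finset.univ_nonempty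
  obtain ⟨p₀⟩ := ‹Nonempty P›
  set L : ℝ := γ * Real.log (x p₀) + c p₀ with hLdef
  have hxval : ∀ p, γ * Real.log (x p) = L - c p := by
    intro p
    have := hKKT p p₀
    rw [hLdef]; rw [hcdef]; simp only []
    linarith [this]
  have hxfac : ∀ p, x p = Real.exp (L / γ) * Real.exp (-c p / γ) := by
    intro p
    have hlog : Real.log (x p) = (L - c p) / γ := by
      have := hxval p; field_simp; linarith
    rw [← Real.exp_log (hxpos p), hlog, ← Real.exp_add]
    congr 1; field_simp; ring
  have hdZ : d = Real.exp (L / γ) * Z := by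
    calc d = ∑ p, x p := hxF.2.symm
      _ = ∑ p, Real.exp (L / γ) * Real.exp (-c p / γ) :=
          Finset.sum_congr rfl fun p _ => hxfac p
      _ = Real.exp (L / γ) * Z := by rw [hZdef, Finset.mul_sum]
  have hlogd : Real.log d = L / γ + Real.log Z := by
    have hc := congrArg Real.log hdZ
    rwa [Real.log_mul (Real.exp_pos _).ne' hZpos.ne', Real.log_exp] at hc
  have hLval : L = γ * Real.log d - γ * Real.log Z := by
    have h := hlogd
    field_simp at h
    linarith
  -- ============ primal value ============
  have hentval : γ * (∑ p, (x p * Real.log (x p) - x p * Real.log d)) =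
      -(∑ e, f e * t e) - γ * (d * Real.log Z) := by
    have h1 : ∀ p, γ * (x p * Real.log (x p) - x p * Real.log d) =
        x p * (L - c p) - γ * (x p * Real.log d) := by
      intro p
      have := hxval p
      calc γ * (x p * Real.log (x p) - x p * Real.log d)
          = x p * (γ * Real.log (x p)) - γ * (x p * Real.log d) := by ring
        _ = x p * (L - c p) - γ * (x p * Real.log d) := by rw [this]
    calc γ * (∑ p, (x p * Real.log (x p) - x p * Real.log d))
        = ∑ p, γ * (x p * Real.log (x p) - x p * Real.log d) := by rw [Finset.mul_sum]
      _ = ∑ p, (x p * L - x p * c p - γ * (x p * Real.log d)) := by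
          refine Finset.sum_congr rfl fun p _ => ?_; rw [h1 p]; ring
      _ = d * L - (∑ e, f e * t e) - γ * (d * Real.log d) := by
          rw [Finset.sum_sub_distrib, Finset.sum_sub_distrib]
          have e1 : (∑ p, x p * L) = d * L := by rw [← Finset.sum_mul, hxF.2]
          have e2 : (∑ p, γ * (x p * Real.log d)) = γ * (d * Real.log d) := by
            rw [show (∑ p, γ * (x p * Real.log d)) = ∑ p, x p * (γ * Real.log d) from
              Finset.sum_congr rfl fun p _ => by ring, ← Finset.sum_mul, hxF.2]
            ring
          have e3 : (∑ p, x p * c p) = ∑ e, f e * t e := hswap t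
          rw [e1, e2, e3]
      _ = -(∑ e, f e * t e) - γ * (d * Real.log Z) := by rw [hLval]; ring
  have hΨx : Ψ x = (∑ e, Sg e (f e)) - (∑ e, f e * t e) - γ * (d * Real.log Z) := by
    have hb : Ψ x = (∑ e, Sg e (f e)) +
        γ * ∑ p, (x p * Real.log (x p) - x p * Real.log d) := by
      simp only [hΨdef, hfdef]
    rw [hb, hentval]; ring
  -- ============ conjugate value at t ============
  have hconj : ∀ e, σs e (t e) = f e * t e - Sg e (f e) := by
    intro e
    rw [hσs]
    have hgr : IsGreatest {v : ℝ | ∃ g, 0 ≤ g ∧ v = g * t e - σ e g}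
        (f e * t e - σ e (f e)) := by
      constructor
      · exact ⟨f e, hf0 e, rfl⟩
      · rintro v ⟨g, hg0, rfl⟩
        rw [hσeq e g hg0, hσeq e (f e) (hf0 e)]
        rcases le_total g (f e) with hle | hle
        · have h1 := hSgub e g (f e) hle
          rw [hTf e] at h1
          nlinarith [h1]
        · have h1 := hSglb e (f e) g hle
          rw [hTf e] at h1
          nlinarith [h1]
    rw [hgr.csSup_eq, hσeq e (f e) (hf0 e)]
  -- ============ weak duality ============
  have hdualge : ∀ u : Fin n → ℝ, -(Ψ x) ≤
      γ * d * Real.log (∑ p, Real.exp (-(∑ e, a p e * u e) / γ)) + ∑ e, σs e (u e) := by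
    intro u
    set cu : P → ℝ := fun p => ∑ e, a p e * u e with hcudef
    set Zu : ℝ := ∑ p, Real.exp (-cu p / γ) with hZudef
    have hZupos : 0 < Zu := Finset.sum_pos (fun p _ => Real.exp_pos _) Finset.univ_nonempty
    set y : P → ℝ := fun p => d * Real.exp (-cu p / γ) / Zu with hydef
    have hypos : ∀ p, 0 < y p := fun p =>
      div_pos (mul_pos hd (Real.exp_pos _)) hZupos
    have hysum : (∑ p, y p) = d := by
      have h1 : (∑ p, y p) = d / Zu * ∑ p, Real.exp (-cu p / γ) := by
        rw [Finset.mul_sum]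
        refine Finset.sum_congr rfl fun p _ => ?_
        show d * Real.exp (-cu p / γ) / Zu = _; ring
      rw [h1, ← hZudef]; field_simp
    have hlogy : ∀ p, Real.log (y p) = Real.log d + (-cu p / γ) - Real.log Zu := by
      intro p
      show Real.log (d * Real.exp (-cu p / γ) / Zu) = _
      rw [Real.log_div (by positivity) hZupos.ne',
        Real.log_mul hd.ne' (Real.exp_pos _).ne', Real.log_exp]
    have hrel : ∀ p, x p - y p ≤ x p * (Real.log (x p) - Real.log (y p)) :=
      fun p => rel_ent (hxpos p).le (hypos p)
    have hsum_rel : 0 ≤ ∑ p, x p * (Real.log (x p) - Real.log (y p)) := by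
      have h0 : (0:ℝ) = ∑ p, (x p - y p) := by
        rw [Finset.sum_sub_distrib, hxF.2, hysum, sub_self]
      rw [h0]
      exact Finset.sum_le_sum fun p _ => hrel p
    have hexpand : γ * ∑ p, x p * (Real.log (x p) - Real.log (y p)) =
        γ * (∑ p, (x p * Real.log (x p) - x p * Real.log d)) +
          (∑ p, x p * cu p) + γ * (d * Real.log Zu) := by
      have h1 : ∀ p, γ * (x p * (Real.log (x p) - Real.log (y p))) =
          γ * (x p * Real.log (x p) - x p * Real.log d) + x p * cu p +
            γ * (x p * Real.log Zu) := by
        intro p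
        rw [hlogy p]
        field_simp
        ring
      calc γ * ∑ p, x p * (Real.log (x p) - Real.log (y p))
          = ∑ p, γ * (x p * (Real.log (x p) - Real.log (y p))) := by rw [Finset.mul_sum]
        _ = ∑ p, (γ * (x p * Real.log (x p) - x p * Real.log d) + x p * cu p +
              γ * (x p * Real.log Zu)) := Finset.sum_congr rfl fun p _ => h1 p
        _ = γ * (∑ p, (x p * Real.log (x p) - x p * Real.log d)) +
              (∑ p, x p * cu p) + γ * (d * Real.log Zu) := by
            rw [Finset.sum_add_distrib, Finset.sum_add_distrib, ← Finset.mul_sum,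
              ← Finset.mul_sum]
            have e4 : (∑ p, x p * Real.log Zu) = d * Real.log Zu := by
              rw [← Finset.sum_mul, hxF.2]
            rw [e4]
    have hkey2 : 0 ≤ γ * (∑ p, (x p * Real.log (x p) - x p * Real.log d)) +
        (∑ e, f e * u e) + γ * (d * Real.log Zu) := by
      rw [← hswap u]
      have hxcu : (∑ p, x p * cu p) = ∑ p, x p * (∑ e, a p e * u e) := rfl
      rw [← hxcu, ← hexpand]
      exact mul_nonneg hγ.le hsum_rel
    have hFsum : (∑ e, (f e * u e - σ e (f e))) ≤ ∑ e, σs e (u e) :=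
      Finset.sum_le_sum fun e _ => hFen e (u e)
    have hσSg : (∑ e, σ e (f e)) = ∑ e, Sg e (f e) :=
      Finset.sum_congr rfl fun e _ => hσeq e (f e) (hf0 e)
    have hΨxb : Ψ x = (∑ e, Sg e (f e)) +
        γ * ∑ p, (x p * Real.log (x p) - x p * Real.log d) := by
      simp only [hΨdef, hfdef]
    rw [hΨxb]
    have hsplit : (∑ e, (f e * u e - σ e (f e))) =
        (∑ e, f e * u e) - ∑ e, Sg e (f e) := by
      rw [Finset.sum_sub_distrib, hσSg]
    rw [hsplit] at hFsum
    nlinarith [hkey2, hFsum]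
  -- ============ assembly ============
  refine ⟨Ψ x, -(Ψ x), ⟨⟨x, hxF, hΦΨ x fun p => (hxpos p).le⟩, ?_⟩,
    ⟨⟨t, Set.mem_univ _, ?_⟩, ?_⟩, by ring⟩
  · rintro v ⟨x', hx'F, rfl⟩
    have := hΦΨ x' hx'F.1
    simp only []
    rw [this]
    exact hxmin hx'F
  · show γ * d * Real.log (∑ p, Real.exp (-(∑ e, a p e * t e) / γ)) +
      (∑ e, σs e (t e)) = -(Ψ x)
    have hZeq : (∑ p, Real.exp (-(∑ e, a p e * t e) / γ)) = Z := rfl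
    rw [hZeq, hΨx]
    have hc2 : (∑ e, σs e (t e)) = (∑ e, f e * t e) - ∑ e, Sg e (f e) := by
      rw [show (∑ e, σs e (t e)) = ∑ e, (f e * t e - Sg e (f e)) from
        Finset.sum_congr rfl fun e _ => hconj e, Finset.sum_sub_distrib]
    rw [hc2]
    ring
  · rintro v ⟨u, _, rfl⟩
    exact hdualge u
end

section
/- In the strictly increasing cost case, the dual problem min_{t} [γ d log(∑_p exp(-⟨a_p,t⟩/γ)) + ∑_e σ_e*(t_e)] has a unique solution t*, and its components satisfy t*_e = τ_e(f*_e), where f* is the edge flow of the unique primal optimum. -/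
open Finset Filter Topology

namespace Stmt18

variable {τ : ℝ → ℝ} {f a b t : ℝ}

noncomputable def tx (τ : ℝ → ℝ) (z : ℝ) : ℝ := τ (max z 0)

lemma cont_tx (hc : ContinuousOn τ (Set.Ici 0)) : Continuous (tx τ) := by
  have h1 : Continuous fun z : ℝ => max z 0 := continuous_id.max continuous_const
  exact hc.comp_continuous h1 (fun z => Set.mem_Ici.2 (le_max_right _ _))

lemma mono_tx (hm : StrictMonoOn τ (Set.Ici 0)) : Monotone (tx τ) := by
  intro x y hxy
  rcases eq_or_lt_of_le (max_le_max hxy (le_refl (0:ℝ))) with h | h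
  · rw [tx, tx, h]
  · exact le_of_lt (hm (Set.mem_Ici.2 (le_max_right _ _)) (Set.mem_Ici.2 (le_max_right _ _)) h)

lemma tx_eq (hf : 0 ≤ f) : tx τ f = τ f := by rw [tx, max_eq_left hf]

noncomputable def sg (τ : ℝ → ℝ) (f : ℝ) : ℝ := ∫ z in (0:ℝ)..f, tx τ z

lemma sg_eq (hf : 0 ≤ f) : sg τ f = ∫ z in (0:ℝ)..f, τ z := by
  refine intervalIntegral.integral_congr (fun z hz => ?_)
  rw [Set.uIcc_of_le hf] at hz
  exact tx_eq hz.1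

lemma intint (hc : ContinuousOn τ (Set.Ici 0)) (a b : ℝ) :
    IntervalIntegrable (tx τ) MeasureTheory.volume a b :=
  ((cont_tx hc)).intervalIntegrable a b

lemma hasDerivAt_sg (hc : ContinuousOn τ (Set.Ici 0)) (f : ℝ) :
    HasDerivAt (sg τ) (tx τ f) f :=
  intervalIntegral.integral_hasDerivAt_right (intint hc 0 f)
    (cont_tx hc).aestronglyMeasurable.stronglyMeasurableAtFilter (cont_tx hc).continuousAt

lemma cont_sg (hc : ContinuousOn τ (Set.Ici 0)) : Continuous (sg τ) :=
  continuous_iff_continuousAt.2 fun f => (hasDerivAt_sg hc f).continuousAt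

lemma sg_sub (hc : ContinuousOn τ (Set.Ici 0)) (a b : ℝ) :
    sg τ b - sg τ a = ∫ z in a..b, tx τ z := by
  rw [sg, sg, ← intervalIntegral.integral_add_adjacent_intervals (intint hc 0 a) (intint hc a b)]
  ring

lemma sg_sub_le (hc : ContinuousOn τ (Set.Ici 0)) (hm : StrictMonoOn τ (Set.Ici 0))
    (hab : a ≤ b) : sg τ b - sg τ a ≤ (b - a) * tx τ b := by
  rw [sg_sub hc]
  calc ∫ z in a..b, tx τ z ≤ ∫ _z in a..b, tx τ b := by
        refine intervalIntegral.integral_mono_on hab (intint hc a b)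
          (intervalIntegrable_const) (fun z hz => mono_tx hm hz.2)
    _ = (b - a) * tx τ b := by simp [mul_comm]

lemma le_sg_sub (hc : ContinuousOn τ (Set.Ici 0)) (hm : StrictMonoOn τ (Set.Ici 0))
    (hab : a ≤ b) : (b - a) * tx τ a ≤ sg τ b - sg τ a := by
  rw [sg_sub hc]
  calc (b - a) * tx τ a = ∫ _z in a..b, tx τ a := by simp [mul_comm]
    _ ≤ ∫ z in a..b, tx τ z := by
        refine intervalIntegral.integral_mono_on hab (intervalIntegrable_const)
          (intint hc a b) (fun z hz => mono_tx hm hz.1)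

lemma convexOn_sg (hc : ContinuousOn τ (Set.Ici 0)) (hm : StrictMonoOn τ (Set.Ici 0)) :
    ConvexOn ℝ Set.univ (sg τ) := by
  refine Monotone.convexOn_univ_of_deriv (fun f => (hasDerivAt_sg hc f).differentiableAt) ?_
  have hderiv : deriv (sg τ) = tx τ := funext fun f => (hasDerivAt_sg hc f).deriv
  rw [hderiv]
  exact mono_tx hm



/-! ### conjugate -/

def K (τ : ℝ → ℝ) (t : ℝ) : Set ℝ := {v | ∃ f, 0 ≤ f ∧ v = f * t - sg τ f}

lemma sg_zero : sg τ 0 = 0 := by simp [sg]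

lemma K_nonempty : (K τ t).Nonempty := ⟨0 * t - sg τ 0, 0, le_refl 0, rfl⟩

lemma mem_K (hf : 0 ≤ f) : f * t - sg τ f ∈ K τ t := ⟨f, hf, rfl⟩

lemma K_le (hc : ContinuousOn τ (Set.Ici 0)) (hm : StrictMonoOn τ (Set.Ici 0))
    {f₀ : ℝ} (hf₀ : 0 ≤ f₀) (hup : t ≤ tx τ f₀) :
    ∀ v ∈ K τ t, v ≤ f₀ * |t - tx τ 0| := by
  rintro v ⟨f, hf, rfl⟩
  have base : ∀ g : ℝ, 0 ≤ g → g ≤ f₀ → g * t - sg τ g ≤ f₀ * |t - tx τ 0| := by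
    intro g hg hgf
    have h1 : g * tx τ 0 ≤ sg τ g - sg τ 0 := by
      simpa using le_sg_sub (a := 0) hc hm hg
    rw [sg_zero] at h1
    have : g * t - sg τ g ≤ g * (t - tx τ 0) := by nlinarith
    refine this.trans ?_
    rcases le_or_gt (t - tx τ 0) 0 with h | h
    · have : g * (t - tx τ 0) ≤ 0 := mul_nonpos_of_nonneg_of_nonpos hg h
      exact this.trans (mul_nonneg hf₀ (abs_nonneg _))
    · rw [abs_of_pos h]
      exact mul_le_mul_of_nonneg_right hgf h.le
  rcases le_or_gt f f₀ with h | h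
  · exact base f hf h
  · have h2 : (f - f₀) * tx τ f₀ ≤ sg τ f - sg τ f₀ := le_sg_sub hc hm h.le
    have h3 : f₀ * t - sg τ f₀ ≤ f₀ * |t - tx τ 0| := base f₀ hf₀ (le_refl _)
    nlinarith [sub_nonneg.2 h.le]

lemma exists_ub (hc : ContinuousOn τ (Set.Ici 0)) (hm : StrictMonoOn τ (Set.Ici 0))
    (hinf : Tendsto τ atTop atTop) (t : ℝ) :
    ∃ B, ∀ v ∈ K τ t, v ≤ B := by
  obtain ⟨f₁, hf₁⟩ := (tendsto_atTop.1 hinf t).exists_forall_of_atTop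
  refine ⟨(max f₁ 0) * |t - tx τ 0|, K_le hc hm (le_max_right _ _) ?_⟩
  rw [tx_eq (le_max_right _ _)]
  exact hf₁ _ (le_max_left _ _)

lemma bddAbove_K (hc : ContinuousOn τ (Set.Ici 0)) (hm : StrictMonoOn τ (Set.Ici 0))
    (hinf : Tendsto τ atTop atTop) (t : ℝ) : BddAbove (K τ t) := by
  obtain ⟨B, hB⟩ := exists_ub hc hm hinf t
  exact ⟨B, hB⟩

lemma le_sSup_K (hc : ContinuousOn τ (Set.Ici 0)) (hm : StrictMonoOn τ (Set.Ici 0))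
    (hinf : Tendsto τ atTop atTop) (hf : 0 ≤ f) :
    f * t - sg τ f ≤ sSup (K τ t) :=
  le_csSup (bddAbove_K hc hm hinf t) (mem_K hf)

/-- at `t = τ f*`, the sup is attained at `f*`. -/
lemma isGreatest_K (hc : ContinuousOn τ (Set.Ici 0)) (hm : StrictMonoOn τ (Set.Ici 0))
    {fs : ℝ} (hfs : 0 ≤ fs) :
    IsGreatest (K τ (tx τ fs)) (fs * tx τ fs - sg τ fs) := by
  constructor
  · exact mem_K hfs
  · rintro v ⟨f, hf, rfl⟩
    rcases le_or_gt fs f with h | h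
    · have := le_sg_sub (a := fs) (b := f) hc hm h
      nlinarith
    · have := sg_sub_le (a := f) (b := fs) hc hm h.le
      nlinarith

lemma sSup_K_at (hc : ContinuousOn τ (Set.Ici 0)) (hm : StrictMonoOn τ (Set.Ici 0))
    {fs : ℝ} (hfs : 0 ≤ fs) :
    sSup (K τ (tx τ fs)) = fs * tx τ fs - sg τ fs :=
  (isGreatest_K hc hm hfs).csSup_eq

/-- if the sup is attained at an interior point `fs > 0` then `t = τ fs`. -/
lemma t_eq_of_attained (hc : ContinuousOn τ (Set.Ici 0)) (hm : StrictMonoOn τ (Set.Ici 0))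
    {fs : ℝ} (hfs : 0 < fs) (hub : ∀ v ∈ K τ t, v ≤ fs * t - sg τ fs) :
    t = tx τ fs := by
  rcases lt_trichotomy t (tx τ fs) with hlt | heq | hgt
  · exfalso
    have hev : ∀ᶠ z in 𝓝 fs, t < tx τ z :=
      ((cont_tx hc).continuousAt (x := fs)).eventually_const_lt hlt
    obtain ⟨ε, hε, hball⟩ := Metric.eventually_nhds_iff.1 hev
    set δ := min (ε / 2) (fs / 2) with hδdef
    have hδ : 0 < δ := lt_min (by linarith) (by linarith)
    have hδfs : δ ≤ fs / 2 := min_le_right _ _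
    have hdist : dist (fs - δ) fs < ε := by
      rw [Real.dist_eq]
      have : |fs - δ - fs| = δ := by rw [show fs - δ - fs = -δ by ring, abs_neg, abs_of_pos hδ]
      rw [this]; exact lt_of_le_of_lt (min_le_left _ _) (by linarith)
    have htx : t < tx τ (fs - δ) := hball hdist
    have h1 : (fs - (fs - δ)) * tx τ (fs - δ) ≤ sg τ fs - sg τ (fs - δ) :=
      le_sg_sub hc hm (by linarith)
    have h2 := hub _ (mem_K (f := fs - δ) (by linarith))
    nlinarith
  · exact heq
  · exfalso
    have hev : ∀ᶠ z in 𝓝 fs, tx τ z < t :=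
      ((cont_tx hc).continuousAt (x := fs)).eventually_lt_const hgt
    obtain ⟨ε, hε, hball⟩ := Metric.eventually_nhds_iff.1 hev
    set δ := ε / 2 with hδdef
    have hδ : 0 < δ := by linarith
    have hdist : dist (fs + δ) fs < ε := by
      rw [Real.dist_eq]
      have : |fs + δ - fs| = δ := by rw [show fs + δ - fs = δ by ring, abs_of_pos hδ]
      rw [this]; linarith
    have htx : tx τ (fs + δ) < t := hball hdist
    have h1 : sg τ (fs + δ) - sg τ fs ≤ (fs + δ - fs) * tx τ (fs + δ) :=
      sg_sub_le hc hm (by linarith)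
    have h2 := hub _ (mem_K (f := fs + δ) (by linarith))
    nlinarith


/-! ### entropy -/

noncomputable def ent (d z : ℝ) : ℝ := z * Real.log z - z * Real.log d

lemma ent_eq {d z : ℝ} (hd : d ≠ 0) (hz : 0 ≤ z) : z * Real.log (z / d) = ent d z := by
  rcases eq_or_lt_of_le hz with h | h
  · simp [ent, ← h]
  · rw [ent, Real.log_div h.ne' hd, mul_sub]

lemma cont_ent (d : ℝ) : Continuous (ent d) :=
  Real.continuous_mul_log.sub (continuous_id.mul continuous_const)

lemma strictConvexOn_ent (d : ℝ) : StrictConvexOn ℝ (Set.Ici 0) (ent d) := by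
  refine Real.strictConvexOn_mul_log.sub_concaveOn ?_
  refine ⟨convex_Ici 0, fun x _ y _ a b _ _ _ => le_of_eq ?_⟩
  simp only [smul_eq_mul]; ring

lemma hasDerivAt_ent {d z : ℝ} (hz : z ≠ 0) :
    HasDerivAt (ent d) (Real.log z + 1 - Real.log d) z := by
  have h1 := Real.hasDerivAt_mul_log hz
  have h2 : HasDerivAt (fun z : ℝ => z * Real.log d) (Real.log d) z := hasDerivAt_mul_const _
  exact h1.sub h2

/-! ### Gibbs inequality -/

lemma gibbs {P : Type*} [Fintype P] [Nonempty P] (q y : P → ℝ)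
    (hq : ∀ p, 0 < q p) (hsum : ∑ p, q p = 1) :
    ∑ p, q p * y p - ∑ p, q p * Real.log (q p) ≤ Real.log (∑ p, Real.exp (y p)) := by
  set Z := ∑ p, Real.exp (y p) with hZdef
  have hZ : 0 < Z := Finset.sum_pos (fun p _ => Real.exp_pos _) Finset.univ_nonempty
  have key : ∀ p, q p * (y p - Real.log (q p) - Real.log Z) ≤ Real.exp (y p) / Z - q p := by
    intro p
    have h1 : Real.log (Real.exp (y p) / (q p * Z)) ≤ Real.exp (y p) / (q p * Z) - 1 :=
      Real.log_le_sub_one_of_pos (div_pos (Real.exp_pos _) (mul_pos (hq p) hZ))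
    have h2 : Real.log (Real.exp (y p) / (q p * Z)) = y p - Real.log (q p) - Real.log Z := by
      rw [Real.log_div (Real.exp_pos _).ne' (mul_pos (hq p) hZ).ne', Real.log_exp,
        Real.log_mul (hq p).ne' hZ.ne']
      ring
    rw [h2] at h1
    have h3 := mul_le_mul_of_nonneg_left h1 (hq p).le
    have h4 : q p * (Real.exp (y p) / (q p * Z) - 1) = Real.exp (y p) / Z - q p := by
      field_simp [(hq p).ne', hZ.ne']
    rw [h4] at h3; exact h3
  have hsum2 : ∑ p, q p * (y p - Real.log (q p) - Real.log Z)
      ≤ ∑ p, (Real.exp (y p) / Z - q p) := Finset.sum_le_sum (fun p _ => key p)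
  have hr : ∑ p, (Real.exp (y p) / Z - q p) = 0 := by
    rw [Finset.sum_sub_distrib, ← Finset.sum_div, ← hZdef, div_self hZ.ne', hsum, sub_self]
  have hl : ∑ p, q p * (y p - Real.log (q p) - Real.log Z)
      = ∑ p, q p * y p - ∑ p, q p * Real.log (q p) - Real.log Z := by
    have h5 : ∀ p ∈ Finset.univ, q p * (y p - Real.log (q p) - Real.log Z)
        = q p * y p - q p * Real.log (q p) - q p * Real.log Z := fun p _ => by ring
    rw [Finset.sum_congr rfl h5, Finset.sum_sub_distrib, Finset.sum_sub_distrib,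
      ← Finset.sum_mul, hsum, one_mul]
  rw [hl, hr] at hsum2
  linarith

end Stmt18


set_option maxHeartbeats 2000000 in
/-- in the strictly increasing cost case (each edge lying on at least
one path, so the dual is coercive), the dual problem
`min_t [γ d log (∑ p, exp (-⟨a_p, t⟩/γ)) + ∑ e, σ_e*(t_e)]` has a unique solution
`t*`, whose components satisfy `t*_e = τ_e(f*_e)` where `f*` is the edge flow of the
(unique) primal optimum. -/
theorem stmt18 (P : Type*) [Fintype P] [Nonempty P] (n : ℕ)
    (a : P → Fin n → ℝ) (ha : ∀ p e, a p e = 0 ∨ a p e = 1)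
    (hcover : ∀ e, ∃ p, a p e = 1)
    (d γ : ℝ) (hd : 0 < d) (hγ : 0 < γ)
    (τ : Fin n → ℝ → ℝ)
    (hτcont : ∀ e, ContinuousOn (τ e) (Set.Ici 0))
    (hτmono : ∀ e, StrictMonoOn (τ e) (Set.Ici 0))
    (hτinf : ∀ e, Tendsto (τ e) atTop atTop)
    (σ : Fin n → ℝ → ℝ) (hσ : ∀ e f, σ e f = ∫ z in (0:ℝ)..f, τ e z)
    (σs : Fin n → ℝ → ℝ)
    (hσs : ∀ e t, σs e t = sSup {v : ℝ | ∃ f, 0 ≤ f ∧ v = f * t - σ e f})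
    (D : (Fin n → ℝ) → ℝ)
    (hD : ∀ t, D t = γ * d * Real.log (∑ p, Real.exp (-(∑ e, a p e * t e) / γ)) +
      ∑ e, σs e (t e))
    (Pobj : (P → ℝ) → ℝ)
    (hPobj : ∀ x, Pobj x = ∑ e, σ e (∑ p, a p e * x p) +
      γ * ∑ p, x p * Real.log (x p / d))
    (S : Set (P → ℝ)) (hS : S = {x : P → ℝ | (∀ p, 0 ≤ x p) ∧ ∑ p, x p = d}) :
    ∃ (tstar : Fin n → ℝ) (xstar : P → ℝ),
      (∀ t, D tstar ≤ D t) ∧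
      (∀ t, (∀ s, D t ≤ D s) → t = tstar) ∧
      xstar ∈ S ∧ (∀ x ∈ S, Pobj xstar ≤ Pobj x) ∧
      (∀ x ∈ S, (∀ y ∈ S, Pobj x ≤ Pobj y) → x = xstar) ∧
      (∀ e, tstar e = τ e (∑ p, a p e * xstar p)) := by
  classical
  set F : (P → ℝ) → Fin n → ℝ := fun x e => ∑ p, a p e * x p with hF
  have ha0 : ∀ p e, 0 ≤ a p e := fun p e => by rcases ha p e with h | h <;> simp [h]
  have ha1 : ∀ p e, a p e ≤ 1 := fun p e => by rcases ha p e with h | h <;> simp [h]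
  have hσsg : ∀ e f, 0 ≤ f → σ e f = Stmt18.sg (τ e) f := fun e f hf => by
    rw [hσ e f, ← Stmt18.sg_eq hf]
  have hσsK : ∀ e t, σs e t = sSup (Stmt18.K (τ e) t) := by
    intro e t
    rw [hσs]; congr 1; ext v
    constructor
    · rintro ⟨f, hf, rfl⟩; exact ⟨f, hf, by rw [hσsg e f hf]⟩
    · rintro ⟨f, hf, rfl⟩; exact ⟨f, hf, by rw [hσsg e f hf]⟩
  have hFnonneg : ∀ x : P → ℝ, (∀ p, 0 ≤ x p) → ∀ e, 0 ≤ F x e := fun x hx e =>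
    Finset.sum_nonneg fun p _ => mul_nonneg (ha0 p e) (hx p)
  have hFle : ∀ x ∈ S, ∀ e, F x e ≤ d := by
    rw [hS]; rintro x ⟨hx0, hxd⟩ e
    calc F x e ≤ ∑ p, x p :=
          Finset.sum_le_sum fun p _ => by
            have := mul_le_mul_of_nonneg_right (ha1 p e) (hx0 p)
            simpa using this
      _ = d := hxd
  -- continuity of the objective
  set Q : (P → ℝ) → ℝ := fun x => ∑ e, Stmt18.sg (τ e) (F x e) + γ * ∑ p, Stmt18.ent d (x p)
    with hQ
  have hPQ : ∀ x : P → ℝ, (∀ p, 0 ≤ x p) → Pobj x = Q x := by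
    intro x hx
    rw [hPobj, hQ]
    congr 1
    · exact Finset.sum_congr rfl fun e _ => hσsg e _ (hFnonneg x hx e)
    · rw [mul_eq_mul_left_iff]
      exact Or.inl (Finset.sum_congr rfl fun p _ => Stmt18.ent_eq hd.ne' (hx p))
  have hQcont : Continuous Q := by
    refine Continuous.add (continuous_finset_sum _ fun e _ => ?_)
      (continuous_const.mul (continuous_finset_sum _ fun p _ => ?_))
    · exact (Stmt18.cont_sg (hτcont e)).comp
        (continuous_finset_sum _ fun p _ => continuous_const.mul (continuous_apply p))
    · exact (Stmt18.cont_ent d).comp (continuous_apply p)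
  have hSmem : ∀ x ∈ S, (∀ p, 0 ≤ x p) ∧ ∑ p, x p = d := by rw [hS]; exact fun x hx => hx
  have hPcont : ContinuousOn Pobj S :=
    hQcont.continuousOn.congr fun x hx => hPQ x (hSmem x hx).1
  -- compactness of S
  have hSclosed : IsClosed S := by
    rw [hS]
    have h1 : IsClosed {x : P → ℝ | ∀ p, 0 ≤ x p} := by
      have : {x : P → ℝ | ∀ p, 0 ≤ x p} = ⋂ p, {x : P → ℝ | 0 ≤ x p} := by
        ext x; simp
      rw [this]
      exact isClosed_iInter fun p => isClosed_le continuous_const (continuous_apply p)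
    have h2 : IsClosed {x : P → ℝ | ∑ p, x p = d} :=
      isClosed_eq (continuous_finset_sum _ fun p _ => continuous_apply p) continuous_const
    exact h1.inter h2
  have hSsub : S ⊆ Set.Icc (fun _ => 0) (fun _ => d) := by
    intro x hx
    obtain ⟨hx0, hxd⟩ := hSmem x hx
    refine ⟨fun p => hx0 p, fun p => ?_⟩
    calc x p ≤ ∑ r, x r := Finset.single_le_sum (fun r _ => hx0 r) (Finset.mem_univ p)
      _ = d := hxd
  have hScompact : IsCompact S := (isCompact_Icc).of_isClosed_subset hSclosed hSsub
  have hSne : S.Nonempty := by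
    refine ⟨fun _ => d / Fintype.card P, ?_⟩
    rw [hS]
    have hcard : (0:ℝ) < Fintype.card P := by
      have := Fintype.card_pos (α := P); positivity
    constructor
    · exact fun p => le_of_lt (div_pos hd hcard)
    · rw [Finset.sum_const, Finset.card_univ, nsmul_eq_mul, mul_div_cancel₀ _ hcard.ne']
  obtain ⟨xstar, hxS, hxmin'⟩ := hScompact.exists_isMinOn hSne hPcont
  have hxmin : ∀ x ∈ S, Pobj xstar ≤ Pobj x := fun x hx => hxmin' hx
  obtain ⟨hx0, hxd⟩ := hSmem xstar hxS
  -- strict convexity: midpoints strictly decrease the objective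
  have hmid : ∀ x ∈ S, ∀ y ∈ S, x ≠ y →
      Pobj (fun p => (x p + y p) / 2) < (Pobj x + Pobj y) / 2 := by
    intro x hx y hy hne
    obtain ⟨hx0', hxd'⟩ := hSmem x hx
    obtain ⟨hy0', hyd'⟩ := hSmem y hy
    set m : P → ℝ := fun p => (x p + y p) / 2 with hm
    have hm0 : ∀ p, 0 ≤ m p := fun p => by
      have := hx0' p; have := hy0' p; simp only [hm]; linarith
    have hFm : ∀ e, F m e = (F x e + F y e) / 2 := by
      intro e
      calc F m e = ∑ p, (a p e * x p / 2 + a p e * y p / 2) :=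
            Finset.sum_congr rfl fun p _ => by simp only [hm]; ring
        _ = (F x e + F y e) / 2 := by
            rw [Finset.sum_add_distrib]
            simp only [hF, ← Finset.sum_div]
            ring
    have hsg : ∀ e, Stmt18.sg (τ e) (F m e)
        ≤ (Stmt18.sg (τ e) (F x e) + Stmt18.sg (τ e) (F y e)) / 2 := by
      intro e
      have hcv := (Stmt18.convexOn_sg (hτcont e) (hτmono e)).2 (Set.mem_univ (F x e))
        (Set.mem_univ (F y e)) (by norm_num : (0:ℝ) ≤ 1/2) (by norm_num : (0:ℝ) ≤ 1/2)
        (by norm_num)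
      simp only [smul_eq_mul] at hcv
      rw [hFm e, show (F x e + F y e) / 2 = 1/2 * F x e + 1/2 * F y e by ring]
      linarith
    obtain ⟨p₀, hp₀⟩ := Function.ne_iff.1 hne
    have hentle : ∀ p, Stmt18.ent d (m p) ≤ (Stmt18.ent d (x p) + Stmt18.ent d (y p)) / 2 := by
      intro p
      rcases eq_or_ne (x p) (y p) with h | h
      · simp only [hm, h]
        rw [show (y p + y p) / 2 = y p by ring]
        linarith
      · have hcv := (Stmt18.strictConvexOn_ent d).2 (hx0' p) (hy0' p) h
          (by norm_num : (0:ℝ) < 1/2) (by norm_num : (0:ℝ) < 1/2) (by norm_num)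
        simp only [smul_eq_mul] at hcv
        simp only [hm]
        rw [show (x p + y p) / 2 = 1/2 * x p + 1/2 * y p by ring]
        linarith
    have hentlt : Stmt18.ent d (m p₀) < (Stmt18.ent d (x p₀) + Stmt18.ent d (y p₀)) / 2 := by
      have hcv := (Stmt18.strictConvexOn_ent d).2 (hx0' p₀) (hy0' p₀) hp₀
        (by norm_num : (0:ℝ) < 1/2) (by norm_num : (0:ℝ) < 1/2) (by norm_num)
      simp only [smul_eq_mul] at hcv
      simp only [hm]
      rw [show (x p₀ + y p₀) / 2 = 1/2 * x p₀ + 1/2 * y p₀ by ring]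
      linarith
    have hsum1 : ∑ e, Stmt18.sg (τ e) (F m e)
        ≤ ∑ e, (Stmt18.sg (τ e) (F x e) + Stmt18.sg (τ e) (F y e)) / 2 :=
      Finset.sum_le_sum fun e _ => hsg e
    have hsum2 : ∑ p, Stmt18.ent d (m p)
        < ∑ p, (Stmt18.ent d (x p) + Stmt18.ent d (y p)) / 2 :=
      Finset.sum_lt_sum (fun p _ => hentle p) ⟨p₀, Finset.mem_univ p₀, hentlt⟩
    have e1 : ∑ e, (Stmt18.sg (τ e) (F x e) + Stmt18.sg (τ e) (F y e)) / 2
        = (∑ e, Stmt18.sg (τ e) (F x e) + ∑ e, Stmt18.sg (τ e) (F y e)) / 2 := by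
      rw [← Finset.sum_div, Finset.sum_add_distrib]
    have e2 : ∑ p, (Stmt18.ent d (x p) + Stmt18.ent d (y p)) / 2
        = (∑ p, Stmt18.ent d (x p) + ∑ p, Stmt18.ent d (y p)) / 2 := by
      rw [← Finset.sum_div, Finset.sum_add_distrib]
    rw [e1] at hsum1
    rw [e2] at hsum2
    rw [hPQ _ hm0, hPQ _ hx0', hPQ _ hy0']
    simp only [hQ]
    have h6 := mul_lt_mul_of_pos_left hsum2 hγ
    have h7 : γ * ((∑ p, Stmt18.ent d (x p) + ∑ p, Stmt18.ent d (y p)) / 2)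
        = (γ * ∑ p, Stmt18.ent d (x p) + γ * ∑ p, Stmt18.ent d (y p)) / 2 := by ring
    rw [h7] at h6
    linarith
  have hmidS : ∀ x ∈ S, ∀ y ∈ S, (fun p => (x p + y p) / 2) ∈ S := by
    intro x hx y hy
    obtain ⟨hx0', hxd'⟩ := hSmem x hx
    obtain ⟨hy0', hyd'⟩ := hSmem y hy
    rw [hS]
    refine ⟨fun p => by have := hx0' p; have := hy0' p; positivity, ?_⟩
    rw [← Finset.sum_div, Finset.sum_add_distrib, hxd', hyd']
    ring
  have huniq : ∀ x ∈ S, (∀ y ∈ S, Pobj x ≤ Pobj y) → x = xstar := by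
    intro x hx hxm
    by_contra hne
    have h1 := hmid x hx xstar hxS hne
    have h2 : Pobj x = Pobj xstar := le_antisymm (hxm xstar hxS) (hxmin x hx)
    have h3 := hxmin _ (hmidS x hx xstar hxS)
    rw [h2] at h1
    have : (Pobj xstar + Pobj xstar) / 2 = Pobj xstar := by ring
    rw [this] at h1
    linarith
  -- every coordinate of the optimum is positive
  have hpos : ∀ p, 0 < xstar p := by
    by_contra hcon
    push_neg at hcon
    obtain ⟨q0, hq0le⟩ := hcon
    have hq0 : xstar q0 = 0 := le_antisymm hq0le (hx0 q0)
    obtain ⟨r0, hr0⟩ : ∃ r, 0 < xstar r := by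
      by_contra h2
      push_neg at h2
      have : ∑ p, xstar p ≤ 0 := Finset.sum_nonpos fun p _ => h2 p
      linarith
    have hqr : q0 ≠ r0 := by rintro rfl; rw [hq0] at hr0; exact lt_irrefl 0 hr0
    set A := xstar r0 with hA
    set Mσ : ℝ := ∑ e, (max 0 (Stmt18.tx (τ e) d) + max 0 (-(Stmt18.tx (τ e) 0))) with hMσ
    set ε : ℝ := min (A/2) (Real.exp (Real.log A - Mσ/γ - 1)) with hεdef
    have hε : 0 < ε := lt_min (by linarith) (Real.exp_pos _)
    have hεA : ε ≤ A/2 := min_le_left _ _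
    have hεlog : Real.log ε ≤ Real.log A - Mσ/γ - 1 := by
      calc Real.log ε ≤ Real.log (Real.exp (Real.log A - Mσ/γ - 1)) :=
            Real.log_le_log hε (min_le_right _ _)
        _ = _ := Real.log_exp _
    set v : P → ℝ := fun p => (if p = q0 then (1:ℝ) else 0) - (if p = r0 then 1 else 0) with hv
    set xε : P → ℝ := fun p => xstar p + ε * v p with hxε
    have hvq : v q0 = 1 := by simp [hv, hqr]
    have hvr : v r0 = -1 := by simp [hv, Ne.symm hqr]
    have hvo : ∀ p, p ≠ q0 → p ≠ r0 → v p = 0 := fun p h1 h2 => by simp [hv, h1, h2]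
    have hxq : xε q0 = ε := by rw [hxε]; simp only [hvq, hq0]; ring
    have hxr : xε r0 = A - ε := by rw [hxε]; simp only [hvr, ← hA]; ring
    have hvsum : ∑ p, v p = 0 := by
      simp [hv, Finset.sum_sub_distrib]
    have hxεS : xε ∈ S := by
      rw [hS]
      constructor
      · intro p
        rcases eq_or_ne p q0 with rfl | h1
        · rw [hxq]; exact hε.le
        rcases eq_or_ne p r0 with rfl | h2
        · rw [hxr]; linarith
        · rw [hxε]; simp only [hvo p h1 h2]; simpa using hx0 p
      · rw [hxε]
        simp only [Finset.sum_add_distrib, ← Finset.mul_sum, hvsum, hxd]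
        ring
    have hxε0 : ∀ p, 0 ≤ xε p := (hSmem _ hxεS).1
    have hsgdiff : ∀ e, Stmt18.sg (τ e) (F xε e) - Stmt18.sg (τ e) (F xstar e)
        ≤ ε * (max 0 (Stmt18.tx (τ e) d) + max 0 (-(Stmt18.tx (τ e) 0))) := by
      intro e
      have hu0 : 0 ≤ F xstar e := hFnonneg xstar hx0 e
      have hud : F xstar e ≤ d := hFle xstar hxS e
      have hw0 : 0 ≤ F xε e := hFnonneg xε hxε0 e
      have hwd : F xε e ≤ d := hFle xε hxεS e
      have hwu : F xε e - F xstar e = ε * (a q0 e - a r0 e) := by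
        rw [hF]
        simp only
        rw [← Finset.sum_sub_distrib]
        have : ∀ p ∈ Finset.univ, a p e * xε p - a p e * xstar p = a p e * (ε * v p) := by
          intro p _; rw [hxε]; ring
        rw [Finset.sum_congr rfl this]
        have hsv : ∑ p, a p e * (ε * v p) = ε * ∑ p, a p e * v p := by
          rw [Finset.mul_sum]; exact Finset.sum_congr rfl fun p _ => by ring
        rw [hsv]
        congr 1
        simp [hv, mul_sub, Finset.sum_sub_distrib, mul_ite, mul_one, mul_zero]
      have habs : |F xε e - F xstar e| ≤ ε := by
        rw [hwu, abs_mul, abs_of_pos hε]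
        have h1 : |a q0 e - a r0 e| ≤ 1 := by
          rw [abs_le]
          constructor <;> [have := ha1 r0 e; have := ha1 q0 e] <;>
            [have := ha0 q0 e; have := ha0 r0 e] <;> linarith
        nlinarith
      have hm1 : (0:ℝ) ≤ max 0 (Stmt18.tx (τ e) d) := le_max_left _ _
      have hm2 : (0:ℝ) ≤ max 0 (-(Stmt18.tx (τ e) 0)) := le_max_left _ _
      rcases le_total (F xstar e) (F xε e) with hle | hle
      · have h1 := Stmt18.sg_sub_le (hτcont e) (hτmono e) hle
        have h2 : Stmt18.tx (τ e) (F xε e) ≤ max 0 (Stmt18.tx (τ e) d) :=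
          (Stmt18.mono_tx (hτmono e) hwd).trans (le_max_right _ _)
        have h3 : F xε e - F xstar e ≤ ε := (abs_le.1 habs).2
        have h4 : 0 ≤ F xε e - F xstar e := by linarith
        have hA1 := mul_le_mul_of_nonneg_left h2 h4
        have hA2 := mul_le_mul_of_nonneg_right h3 hm1
        have hA3 := mul_nonneg hε.le hm2
        have hgoal : ε * (max 0 (Stmt18.tx (τ e) d) + max 0 (-(Stmt18.tx (τ e) 0)))
            = ε * max 0 (Stmt18.tx (τ e) d) + ε * max 0 (-(Stmt18.tx (τ e) 0)) := by ring
        rw [hgoal]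
        nlinarith [hA1, hA2, hA3, h1]
      · have h1 := Stmt18.le_sg_sub (hτcont e) (hτmono e) hle
        have h2 : -(Stmt18.tx (τ e) (F xε e)) ≤ max 0 (-(Stmt18.tx (τ e) 0)) := by
          have := Stmt18.mono_tx (hτmono e) hw0
          have h5 : Stmt18.tx (τ e) 0 ≤ Stmt18.tx (τ e) (F xε e) := this
          have : -(Stmt18.tx (τ e) (F xε e)) ≤ -(Stmt18.tx (τ e) 0) := by linarith
          exact this.trans (le_max_right _ _)
        have h3 : F xstar e - F xε e ≤ ε := by
          rw [abs_sub_comm] at habs; exact (abs_le.1 habs).2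
        have h4 : 0 ≤ F xstar e - F xε e := by linarith
        have hA1 := mul_le_mul_of_nonneg_left h2 h4
        have hA2 := mul_le_mul_of_nonneg_right h3 hm2
        have hA3 := mul_nonneg hε.le hm1
        have hgoal : ε * (max 0 (Stmt18.tx (τ e) d) + max 0 (-(Stmt18.tx (τ e) 0)))
            = ε * max 0 (Stmt18.tx (τ e) d) + ε * max 0 (-(Stmt18.tx (τ e) 0)) := by ring
        rw [hgoal]
        nlinarith [hA1, hA2, hA3, h1]
    have hentdiff : ∑ p, (Stmt18.ent d (xε p) - Stmt18.ent d (xstar p))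
        ≤ ε * Real.log ε - ε * Real.log A := by
      have hzero : ∀ p ∈ Finset.univ, p ∉ ({q0, r0} : Finset P) →
          Stmt18.ent d (xε p) - Stmt18.ent d (xstar p) = 0 := by
        intro p _ hp
        simp only [Finset.mem_insert, Finset.mem_singleton, not_or] at hp
        rw [hxε]
        simp only [hvo p hp.1 hp.2]
        ring_nf
      rw [← Finset.sum_subset (Finset.subset_univ ({q0, r0} : Finset P)) hzero,
        Finset.sum_pair hqr, hxq, hxr, hq0]
      have hent0 : Stmt18.ent d 0 = 0 := by simp [Stmt18.ent]
      have hentε : Stmt18.ent d ε = ε * Real.log ε - ε * Real.log d := rfl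
      have hkey : Stmt18.ent d (A - ε) - Stmt18.ent d A ≤ ε * (Real.log d - Real.log A) := by
        have hl : Real.log (A - ε) ≤ Real.log A := Real.log_le_log (by linarith) (by linarith)
        have h5 : (A - ε) * Real.log (A - ε) ≤ (A - ε) * Real.log A :=
          mul_le_mul_of_nonneg_left hl (by linarith)
        simp only [Stmt18.ent]
        nlinarith
      rw [hent0, hentε]
      have := hkey
      simp only [Stmt18.ent] at this ⊢
      nlinarith
    -- combine
    have hQdiff : Q xε - Q xstar
        = ∑ e, (Stmt18.sg (τ e) (F xε e) - Stmt18.sg (τ e) (F xstar e))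
          + γ * ∑ p, (Stmt18.ent d (xε p) - Stmt18.ent d (xstar p)) := by
      simp only [hQ, Finset.sum_sub_distrib]
      ring
    have hσbound : ∑ e, (Stmt18.sg (τ e) (F xε e) - Stmt18.sg (τ e) (F xstar e)) ≤ ε * Mσ := by
      rw [hMσ, Finset.mul_sum]
      exact Finset.sum_le_sum fun e _ => hsgdiff e
    have h0le : Q xstar ≤ Q xε := by
      rw [← hPQ _ hx0, ← hPQ _ hxε0]
      exact hxmin xε hxεS
    have hγlog := mul_le_mul_of_nonneg_left hεlog hγ.le
    have hcancel : γ * (Mσ / γ) = Mσ := mul_div_cancel₀ _ hγ.ne'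
    have hfin : Q xε - Q xstar ≤ ε * Mσ + γ * (ε * Real.log ε - ε * Real.log A) := by
      rw [hQdiff]
      have := mul_le_mul_of_nonneg_left hentdiff hγ.le
      linarith
    have hγlog2 : γ * Real.log ε ≤ γ * Real.log A - Mσ - γ := by
      have h8 := mul_le_mul_of_nonneg_left hεlog hγ.le
      rw [mul_sub, mul_sub, hcancel] at h8
      linarith
    have hbig := mul_le_mul_of_nonneg_left hγlog2 hε.le
    nlinarith [mul_pos hε hγ]
  -- every edge flow is positive
  have hfpos : ∀ e, 0 < F xstar e := by
    intro e
    obtain ⟨p₁, hp₁⟩ := hcover e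
    have h1 : a p₁ e * xstar p₁ ≤ F xstar e :=
      Finset.single_le_sum (f := fun p => a p e * xstar p)
        (fun p _ => mul_nonneg (ha0 p e) (hx0 p)) (Finset.mem_univ p₁)
    rw [hp₁, one_mul] at h1
    exact lt_of_lt_of_le (hpos p₁) h1
  -- stationarity
  have hstat : ∀ p q : P,
      ∑ e, a p e * τ e (F xstar e) + γ * (Real.log (xstar p) + 1 - Real.log d)
      = ∑ e, a q e * τ e (F xstar e) + γ * (Real.log (xstar q) + 1 - Real.log d) := by
    intro p q
    rcases eq_or_ne p q with rfl | hpq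
    · rfl
    set v : P → ℝ := fun r => (if r = p then (1:ℝ) else 0) - (if r = q then 1 else 0) with hv
    set c : Fin n → ℝ := fun e => a p e - a q e with hc
    have hvp : v p = 1 := by simp [hv, hpq]
    have hvq : v q = -1 := by simp [hv, Ne.symm hpq]
    have hvo : ∀ r, r ≠ p → r ≠ q → v r = 0 := fun r h1 h2 => by simp [hv, h1, h2]
    have hv1 : ∀ r, |v r| ≤ 1 := by
      intro r
      rcases eq_or_ne r p with rfl | h1
      · rw [hvp]; simp
      rcases eq_or_ne r q with rfl | h2
      · rw [hvq]; simp
      · rw [hvo r h1 h2]; simp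
    have hvsum : ∑ r, v r = 0 := by simp [hv, Finset.sum_sub_distrib]
    set ψ : ℝ → ℝ := fun s => ∑ e, Stmt18.sg (τ e) (F xstar e + s * c e)
      + γ * ∑ r, Stmt18.ent d (xstar r + s * v r) with hψ
    set δ := min (xstar p) (xstar q) with hδ
    have hδpos : 0 < δ := lt_min (hpos p) (hpos q)
    have hFs : ∀ s : ℝ, ∀ e, F (fun r => xstar r + s * v r) e = F xstar e + s * c e := by
      intro s e
      rw [hF]
      simp only
      rw [show (∑ r, a r e * (xstar r + s * v r))
          = ∑ r, (a r e * xstar r + s * (a r e * v r)) from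
          Finset.sum_congr rfl fun r _ => by ring]
      rw [Finset.sum_add_distrib, ← Finset.mul_sum]
      have hav : ∑ r, a r e * v r = c e := by
        rw [hc]; simp [hv, mul_sub, Finset.sum_sub_distrib, mul_ite, mul_one, mul_zero]
      rw [hav]
    have hlocal : IsLocalMin ψ 0 := by
      rw [IsLocalMin, IsMinFilter, Metric.eventually_nhds_iff]
      refine ⟨δ, hδpos, fun s hs => ?_⟩
      rw [Real.dist_0_eq_abs] at hs
      set xs : P → ℝ := fun r => xstar r + s * v r with hxs
      have hxs0 : ∀ r, 0 ≤ xs r := by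
        intro r
        have habs : |s * v r| ≤ |s| := by
          rw [abs_mul]
          nlinarith [hv1 r, abs_nonneg s, abs_nonneg (v r)]
        have h2 : -|s| ≤ s * v r := (abs_le.1 habs).1 |>.trans' (by linarith [neg_abs_le (s * v r)])
        rcases eq_or_ne r p with rfl | h1
        · have : δ ≤ xstar r := min_le_left _ _
          rw [hxs]; simp only; nlinarith [neg_abs_le (s * v r), habs]
        rcases eq_or_ne r q with rfl | h2
        · have : δ ≤ xstar r := min_le_right _ _
          rw [hxs]; simp only; nlinarith [neg_abs_le (s * v r), habs]
        · rw [hxs]; simp only [hvo r h1 h2, mul_zero, add_zero]; exact hx0 r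
      have hxsS : xs ∈ S := by
        rw [hS]
        refine ⟨hxs0, ?_⟩
        rw [hxs]
        simp only [Finset.sum_add_distrib, ← Finset.mul_sum, hvsum, hxd]
        ring
      have hψs : ψ s = Q xs := by
        rw [hψ, hQ]
        simp only
        congr 1
        exact (Finset.sum_congr rfl fun e _ => by rw [hFs s e]).symm
      have hψ0 : ψ 0 = Q xstar := by
        rw [hψ, hQ]
        simp only [zero_mul, add_zero]
      rw [hψs, hψ0, ← hPQ _ hx0, ← hPQ _ hxs0]
      exact hxmin xs hxsS
    have hder : HasDerivAt ψ (∑ e, Stmt18.tx (τ e) (F xstar e) * c e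
        + γ * ∑ r, (Real.log (xstar r) + 1 - Real.log d) * v r) 0 := by
      have h1 : ∀ e ∈ Finset.univ, HasDerivAt
          (fun s : ℝ => Stmt18.sg (τ e) (F xstar e + s * c e))
          (Stmt18.tx (τ e) (F xstar e) * c e) 0 := by
        intro e _
        have hinner : HasDerivAt (fun s : ℝ => F xstar e + s * c e) (c e) 0 := by
          simpa using ((hasDerivAt_id (0:ℝ)).mul_const (c e)).const_add (F xstar e)
        have h00 : F xstar e + (0:ℝ) * c e = F xstar e := by ring
        have houter : HasDerivAt (Stmt18.sg (τ e)) (Stmt18.tx (τ e) (F xstar e))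
            (F xstar e + (0:ℝ) * c e) := by
          rw [h00]; exact Stmt18.hasDerivAt_sg (hτcont e) (F xstar e)
        exact houter.comp 0 hinner
      have h2 : ∀ r ∈ Finset.univ, HasDerivAt
          (fun s : ℝ => Stmt18.ent d (xstar r + s * v r))
          ((Real.log (xstar r) + 1 - Real.log d) * v r) 0 := by
        intro r _
        have hinner : HasDerivAt (fun s : ℝ => xstar r + s * v r) (v r) 0 := by
          simpa using ((hasDerivAt_id (0:ℝ)).mul_const (v r)).const_add (xstar r)
        have h00 : xstar r + (0:ℝ) * v r = xstar r := by ring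
        have houter : HasDerivAt (Stmt18.ent d) (Real.log (xstar r) + 1 - Real.log d)
            (xstar r + (0:ℝ) * v r) := by
          rw [h00]; exact Stmt18.hasDerivAt_ent (hpos r).ne'
        exact houter.comp 0 hinner
      exact (HasDerivAt.fun_sum h1).add ((HasDerivAt.fun_sum h2).const_mul γ)
    have hzero : ∑ e, Stmt18.tx (τ e) (F xstar e) * c e
        + γ * ∑ r, (Real.log (xstar r) + 1 - Real.log d) * v r = 0 := by
      rw [← hder.deriv]
      exact hlocal.deriv_eq_zero
    have hsum1 : ∑ e, Stmt18.tx (τ e) (F xstar e) * c e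
        = ∑ e, a p e * τ e (F xstar e) - ∑ e, a q e * τ e (F xstar e) := by
      rw [← Finset.sum_sub_distrib]
      refine Finset.sum_congr rfl fun e _ => ?_
      rw [Stmt18.tx_eq (hfpos e).le, hc]
      ring
    have hsum2 : ∑ r, (Real.log (xstar r) + 1 - Real.log d) * v r
        = (Real.log (xstar p) + 1 - Real.log d) - (Real.log (xstar q) + 1 - Real.log d) := by
      rw [hv]
      simp only [mul_sub, Finset.sum_sub_distrib, mul_ite, mul_one, mul_zero]
      simp
    rw [hsum1, hsum2] at hzero
    linarith
  -- the dual candidate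
  set tstar : Fin n → ℝ := fun e => τ e (F xstar e) with htstar
  have htse : ∀ e, tstar e = τ e (F xstar e) := fun e => by rw [htstar]
  have htxe : ∀ e, tstar e = Stmt18.tx (τ e) (F xstar e) := fun e => by
    rw [htse e, Stmt18.tx_eq (hfpos e).le]
  obtain ⟨p1⟩ := (inferInstance : Nonempty P)
  set lam : ℝ := ∑ e, a p1 e * tstar e + γ * (Real.log (xstar p1) + 1 - Real.log d) with hlam
  have hG : ∀ p, ∑ e, a p e * tstar e + γ * (Real.log (xstar p) + 1 - Real.log d) = lam := by
    intro p
    rw [hlam]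
    simp only [htse]
    exact hstat p p1
  have hFx : ∀ x : P → ℝ, ∀ e, (∑ p, a p e * x p) = F x e := fun x e => by rw [hF]
  -- softmax identity
  have hexp : ∀ p, Real.exp ((-∑ e, a p e * tstar e) / γ)
      = xstar p / d * Real.exp (1 - lam / γ) := by
    intro p
    have h2 := hG p
    have h3 : (-∑ e, a p e * tstar e) / γ
        = Real.log (xstar p) - Real.log d + (1 - lam / γ) := by
      have h5 : ∑ e, a p e * tstar e
          = lam - γ * (Real.log (xstar p) + 1 - Real.log d) := by linarith
      rw [h5]
      field_simp
      ring
    rw [h3, Real.exp_add, Real.exp_sub, Real.exp_log (hpos p), Real.exp_log hd]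
  have hZstar : ∑ p, Real.exp ((-∑ e, a p e * tstar e) / γ) = Real.exp (1 - lam / γ) := by
    rw [Finset.sum_congr rfl fun p _ => hexp p, ← Finset.sum_mul, ← Finset.sum_div, hxd,
      div_self hd.ne', one_mul]
  have hσs_star : ∀ e, σs e (tstar e)
      = F xstar e * tstar e - Stmt18.sg (τ e) (F xstar e) := by
    intro e
    rw [hσsK, htxe e, Stmt18.sSup_K_at (hτcont e) (hτmono e) (hfpos e).le]
  -- swap-sums identity
  have hswap : ∀ t : Fin n → ℝ, ∑ p, xstar p * ∑ e, a p e * t e = ∑ e, F xstar e * t e := by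
    intro t
    calc ∑ p, xstar p * ∑ e, a p e * t e
        = ∑ p, ∑ e, xstar p * (a p e * t e) :=
          Finset.sum_congr rfl fun p _ => Finset.mul_sum _ _ _
      _ = ∑ e, ∑ p, xstar p * (a p e * t e) := Finset.sum_comm
      _ = ∑ e, F xstar e * t e := by
          refine Finset.sum_congr rfl fun e _ => ?_
          rw [← hFx xstar e, Finset.sum_mul]
          exact Finset.sum_congr rfl fun p _ => by ring
  -- entropy of the optimum
  have hentstar : γ * ∑ p, xstar p * Real.log (xstar p / d)
      = d * (lam - γ) - ∑ e, F xstar e * tstar e := by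
    have h1 : ∀ p, γ * (xstar p * Real.log (xstar p / d))
        = xstar p * (lam - γ) - xstar p * ∑ e, a p e * tstar e := by
      intro p
      have h2 := hG p
      have h3 : Real.log (xstar p / d) = Real.log (xstar p) - Real.log d :=
        Real.log_div (hpos p).ne' hd.ne'
      have h4 : xstar p * (∑ e, a p e * tstar e
          + γ * (Real.log (xstar p) + 1 - Real.log d)) = xstar p * lam := by rw [h2]
      rw [h3]
      nlinarith [h4]
    calc γ * ∑ p, xstar p * Real.log (xstar p / d)
        = ∑ p, (xstar p * (lam - γ) - xstar p * ∑ e, a p e * tstar e) := by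
          rw [Finset.mul_sum]; exact Finset.sum_congr rfl fun p _ => h1 p
      _ = (∑ p, xstar p) * (lam - γ) - ∑ p, xstar p * ∑ e, a p e * tstar e := by
          rw [Finset.sum_sub_distrib, Finset.sum_mul]
      _ = d * (lam - γ) - ∑ e, F xstar e * tstar e := by rw [hxd, hswap]
  -- value of the dual at tstar
  have hDstar : D tstar = -Pobj xstar := by
    rw [hD, hPobj, hZstar, Real.log_exp]
    have h1 : ∑ e, σs e (tstar e)
        = ∑ e, F xstar e * tstar e - ∑ e, Stmt18.sg (τ e) (F xstar e) := by
      rw [← Finset.sum_sub_distrib]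
      exact Finset.sum_congr rfl fun e _ => hσs_star e
    rw [h1]
    have h2 : ∑ e, σ e (∑ p, a p e * xstar p) = ∑ e, Stmt18.sg (τ e) (F xstar e) := by
      refine Finset.sum_congr rfl fun e _ => ?_
      rw [hFx xstar e]
      exact hσsg e _ (hFnonneg xstar hx0 e)
    rw [h2]
    have h4 : γ * d * (1 - lam / γ) = γ * d - d * lam := by field_simp
    linarith [hentstar]
  -- weak duality
  have hweak : ∀ t, -Pobj xstar ≤ D t := by
    intro t
    have hgb := Stmt18.gibbs (fun p => xstar p / d) (fun p => (-∑ e, a p e * t e) / γ)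
      (fun p => div_pos (hpos p) hd) (by rw [← Finset.sum_div, hxd, div_self hd.ne'])
    have hmul := mul_le_mul_of_nonneg_left hgb
      (mul_nonneg hγ.le hd.le : (0:ℝ) ≤ γ * d)
    have h1 : γ * d * ∑ p, xstar p / d * ((-∑ e, a p e * t e) / γ)
        = -∑ e, F xstar e * t e := by
      rw [Finset.mul_sum, ← hswap t, ← Finset.sum_neg_distrib]
      refine Finset.sum_congr rfl fun p _ => ?_
      field_simp
    have h2 : γ * d * ∑ p, xstar p / d * Real.log (xstar p / d)
        = γ * ∑ p, xstar p * Real.log (xstar p / d) := by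
      rw [Finset.mul_sum, Finset.mul_sum]
      refine Finset.sum_congr rfl fun p _ => ?_
      field_simp
    have hσsge : ∀ e, F xstar e * t e - Stmt18.sg (τ e) (F xstar e) ≤ σs e (t e) := by
      intro e
      rw [hσsK]
      exact Stmt18.le_sSup_K (hτcont e) (hτmono e) (hτinf e) (hFnonneg xstar hx0 e)
    have hσsum : ∑ e, F xstar e * t e - ∑ e, Stmt18.sg (τ e) (F xstar e)
        ≤ ∑ e, σs e (t e) := by
      rw [← Finset.sum_sub_distrib]
      exact Finset.sum_le_sum fun e _ => hσsge e
    rw [hD, hPobj]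
    have h3 : ∑ e, σ e (∑ p, a p e * xstar p) = ∑ e, Stmt18.sg (τ e) (F xstar e) := by
      refine Finset.sum_congr rfl fun e _ => ?_
      rw [hFx xstar e]
      exact hσsg e _ (hFnonneg xstar hx0 e)
    rw [h3]
    rw [mul_sub] at hmul
    linarith [hmul, hσsum]
  refine ⟨tstar, xstar, ?_, ?_, hxS, hxmin, huniq, fun e => htse e⟩
  · intro t
    rw [hDstar]
    exact hweak t
  · -- uniqueness of the dual optimum
    intro t ht
    have hDt : D t = -Pobj xstar := by
      refine le_antisymm ?_ (hweak t)
      rw [← hDstar]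
      exact ht tstar
    -- the Gibbs part of the chain at t
    have hgb := Stmt18.gibbs (fun p => xstar p / d) (fun p => (-∑ e, a p e * t e) / γ)
      (fun p => div_pos (hpos p) hd) (by rw [← Finset.sum_div, hxd, div_self hd.ne'])
    have hmul := mul_le_mul_of_nonneg_left hgb
      (mul_nonneg hγ.le hd.le : (0:ℝ) ≤ γ * d)
    have h1 : γ * d * ∑ p, xstar p / d * ((-∑ e, a p e * t e) / γ)
        = -∑ e, F xstar e * t e := by
      rw [Finset.mul_sum, ← hswap t, ← Finset.sum_neg_distrib]
      refine Finset.sum_congr rfl fun p _ => ?_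
      field_simp
    have h2 : γ * d * ∑ p, xstar p / d * Real.log (xstar p / d)
        = γ * ∑ p, xstar p * Real.log (xstar p / d) := by
      rw [Finset.mul_sum, Finset.mul_sum]
      refine Finset.sum_congr rfl fun p _ => ?_
      field_simp
    have hσsge : ∀ e, F xstar e * t e - Stmt18.sg (τ e) (F xstar e) ≤ σs e (t e) := by
      intro e
      rw [hσsK]
      exact Stmt18.le_sSup_K (hτcont e) (hτmono e) (hτinf e) (hFnonneg xstar hx0 e)
    -- sum of the slacks is ≤ 0
    have hsum0 : ∑ e, (σs e (t e) - (F xstar e * t e - Stmt18.sg (τ e) (F xstar e))) ≤ 0 := by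
      rw [Finset.sum_sub_distrib]
      have hD' := hDt
      rw [hD, hPobj] at hD'
      have h3 : ∑ e, σ e (∑ p, a p e * xstar p) = ∑ e, Stmt18.sg (τ e) (F xstar e) := by
        refine Finset.sum_congr rfl fun e _ => ?_
        rw [hFx xstar e]
        exact hσsg e _ (hFnonneg xstar hx0 e)
      rw [h3] at hD'
      rw [Finset.sum_sub_distrib]
      rw [mul_sub] at hmul
      linarith [hmul]
    have hterm : ∀ e, σs e (t e) = F xstar e * t e - Stmt18.sg (τ e) (F xstar e) := by
      intro e
      have hnn : ∀ e' ∈ Finset.univ,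
          0 ≤ σs e' (t e') - (F xstar e' * t e' - Stmt18.sg (τ e') (F xstar e')) :=
        fun e' _ => sub_nonneg.2 (hσsge e')
      have hall := (Finset.sum_eq_zero_iff_of_nonneg hnn).1
        (le_antisymm hsum0 (Finset.sum_nonneg hnn)) e (Finset.mem_univ e)
      linarith [hall]
    funext e
    have hub : ∀ v ∈ Stmt18.K (τ e) (t e),
        v ≤ F xstar e * t e - Stmt18.sg (τ e) (F xstar e) := by
      intro v hv
      have := le_csSup (Stmt18.bddAbove_K (hτcont e) (hτmono e) (hτinf e) (t e)) hv
      rw [← hσsK, hterm e] at this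
      exact this
    rw [htxe e]
    exact Stmt18.t_eq_of_attained (hτcont e) (hτmono e) (hfpos e) hub
end
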